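/- arXiv:2604.10479 — 2 statements merged into one kernel-verified Lean document; each statement's English description precedes it below -/
import Mathlib

section
/- Fix constants c_m ≥ 2 and c_k ≥ c_m + 1. If, in the construction, the k·w polynomials g^{(i,j)} : F_2^{log₂ m} → F_2 are drawn independently and uniformly at random from the set of polynomials of total degree at most ⌈log₂ n⌉, then the probability that the resulting matrix G is a (1 − 1/√⌈log₂ n⌉, ⌊2^w/(⌈log₂ n⌉)^2⌋)-expander tends to 1 as n → ∞. -/
open Finset

/-- Coefficient space for (multilinear representatives of) polynomials over `F_2`
in `d` variables of total degree at most `r`; a uniformly random such coefficient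
vector corresponds to a uniformly random polynomial of total degree at most `r`,
viewed as a function `F_2^d → F_2`. -/
abbrev CoefSp (d r : ℕ) := {S : Finset (Fin d) // S.card ≤ r} → ZMod 2

/-- Evaluation of the polynomial with coefficient vector `c` at the point `p`. -/
def evalC {d r : ℕ} (c : CoefSp d r) (p : Fin d → ZMod 2) : ZMod 2 :=
  ∑ S : {S : Finset (Fin d) // S.card ≤ r}, c S * ∏ i ∈ S.1, p i

/-- Totalization of a doubly indexed family of coefficient vectors. -/
def cExt {d r k w : ℕ} (c : Fin k → Fin w → CoefSp d r) (i t : ℕ) : CoefSp d r :=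
  if h : i < k ∧ t < w then c ⟨i, h.1⟩ ⟨t, h.2⟩ else fun _ => 0

open scoped Classical in
/-- The matrix `G = [M^{(1)} ‖ … ‖ M^{(k)}]`, padded with zero columns up to width
`n`.  Rows are indexed by points `p ∈ F_2^d`; column `j` encodes the pair
`(i, q) = (j / 2^w, bits of j % 2^w)`, and `M^{(i)}_{p, q} = 1` iff
`g^{(i,t)}(p) = q_t` for all `t < w`. -/
noncomputable def Gof (n L k w d : ℕ) (c : Fin k → Fin w → CoefSp d L) :
    (Fin d → ZMod 2) → Fin n → ZMod 2 := fun p j =>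
  if ((j : ℕ) < k * 2 ^ w ∧
      ∀ t < w, evalC (cExt c ((j : ℕ) / 2 ^ w) t) p =
        (if Nat.testBit ((j : ℕ) % 2 ^ w) t then 1 else 0))
  then 1 else 0

/-- Hamming weight of the coordinatewise logical OR of the rows of `G` indexed
by the set `T`. -/
noncomputable def orWeight {ρ ν : Type*} [Fintype ν] (G : ρ → ν → ZMod 2)
    (T : Finset ρ) : ℕ :=
  Nat.card {j : ν // ∃ i ∈ T, G i j ≠ 0}

/-- `G` is a `(γ, t)`-expander: every nonempty set of at most `t` rows has the
Hamming weight of its coordinatewise OR at least `γ·k` times the number of rows. -/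
def IsExpander {ρ ν : Type*} [Fintype ν] (G : ρ → ν → ZMod 2) (γ : ℝ)
    (k t : ℕ) : Prop :=
  ∀ T : Finset ρ, T.Nonempty → T.card ≤ t →
    (γ * k * T.card : ℝ) ≤ (orWeight G T : ℝ)



/-- Evaluation of a full multilinear coefficient vector. -/
def ev {d : ℕ} (c : Finset (Fin d) → ZMod 2) (p : Fin d → ZMod 2) : ZMod 2 :=
  ∑ S : Finset (Fin d), c S * ∏ i ∈ S, p i

lemma ev_add {d : ℕ} (c c' : Finset (Fin d) → ZMod 2) (p : Fin d → ZMod 2) :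
    ev (fun A => c A + c' A) p = ev c p + ev c' p := by
  simp [ev, add_mul, Finset.sum_add_distrib]

/-- preimage of a finset of `Fin (d+1)` under castSucc -/
noncomputable def pre {d : ℕ} (A : Finset (Fin (d + 1))) : Finset (Fin d) :=
  A.preimage Fin.castSucc (Fin.castSucc_injective d).injOn

lemma pre_map {d : ℕ} (B : Finset (Fin d)) : pre (B.map Fin.castSuccEmb) = B := by
  classical
  ext x
  simp [pre, Finset.mem_preimage, Fin.castSuccEmb, Fin.castSucc, Fin.castAdd]

lemma last_not_mem_map {d : ℕ} (B : Finset (Fin d)) :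
    Fin.last d ∉ B.map Fin.castSuccEmb := by
  simp only [Finset.mem_map, Fin.castSuccEmb]
  rintro ⟨b, -, hb⟩
  exact absurd hb (Fin.ne_of_lt (Fin.castSucc_lt_last b))

lemma map_pre {d : ℕ} (A : Finset (Fin (d + 1))) (hA : Fin.last d ∉ A) :
    (pre A).map Fin.castSuccEmb = A := by
  classical
  ext x
  simp only [Finset.mem_map, pre, Finset.mem_preimage, Fin.castSuccEmb,
    Function.Embedding.coeFn_mk]
  constructor
  · rintro ⟨b, hb, rfl⟩; exact hb
  · intro hx
    have hxl : x ≠ Fin.last d := fun h => hA (h ▸ hx)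
    exact ⟨x.castPred hxl, by simpa using hx, Fin.castSucc_castPred x hxl⟩

lemma sum_split {M : Type*} [AddCommMonoid M] (d : ℕ) (f : Finset (Fin (d + 1)) → M) :
    ∑ A : Finset (Fin (d + 1)), f A
      = ∑ B : Finset (Fin d), f (B.map Fin.castSuccEmb)
        + ∑ B : Finset (Fin d), f (insert (Fin.last d) (B.map Fin.castSuccEmb)) := by
  classical
  have hbij : Function.Bijective
      (Sum.elim (fun B : Finset (Fin d) => B.map Fin.castSuccEmb)
        (fun B : Finset (Fin d) => insert (Fin.last d) (B.map Fin.castSuccEmb))) := by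
    constructor
    · rintro (B₁ | B₁) (B₂ | B₂) h <;> simp only [Sum.elim_inl, Sum.elim_inr] at h
      · exact congrArg Sum.inl (Finset.map_injective _ h)
      · exact absurd (h ▸ Finset.mem_insert_self (Fin.last d) _) (last_not_mem_map B₁)
      · exact absurd (h ▸ last_not_mem_map B₂) (by simp)
      · refine congrArg Sum.inr (Finset.map_injective Fin.castSuccEmb ?_)
        have := congrArg (fun s => Finset.erase s (Fin.last d)) h
        simpa [Finset.erase_insert (last_not_mem_map B₁),
          Finset.erase_insert (last_not_mem_map B₂)] using this
    · intro A
      by_cases hA : Fin.last d ∈ A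
      · refine ⟨Sum.inr (pre (A.erase (Fin.last d))), ?_⟩
        simp only [Sum.elim_inr, map_pre _ (Finset.notMem_erase _ _)]
        exact Finset.insert_erase hA
      · exact ⟨Sum.inl (pre A), by simp only [Sum.elim_inl, map_pre _ hA]⟩
  calc ∑ A : Finset (Fin (d + 1)), f A
      = ∑ x : Finset (Fin d) ⊕ Finset (Fin d),
          f (Sum.elim (fun B : Finset (Fin d) => B.map Fin.castSuccEmb)
            (fun B : Finset (Fin d) => insert (Fin.last d) (B.map Fin.castSuccEmb)) x) :=
        (Fintype.sum_bijective _ hbij _ _ (fun x => rfl)).symm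
    _ = _ := by rw [Fintype.sum_sum_type]; simp only [Sum.elim_inl, Sum.elim_inr]

/-- combination coefficients for `g + x_last * h`. -/
noncomputable def comb {d : ℕ} (cg ch : Finset (Fin d) → ZMod 2) :
    Finset (Fin (d + 1)) → ZMod 2 := fun A => by
  classical
  exact if Fin.last d ∈ A then ch (pre (A.erase (Fin.last d))) else cg (pre A)

lemma ev_comb {d : ℕ} (cg ch : Finset (Fin d) → ZMod 2) (p : Fin (d + 1) → ZMod 2) :
    ev (comb cg ch) p
      = ev cg (p ∘ Fin.castSucc) + p (Fin.last d) * ev ch (p ∘ Fin.castSucc) := by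
  classical
  rw [ev, sum_split]
  congr 1
  · apply Fintype.sum_congr
    intro B
    rw [comb]
    simp only [last_not_mem_map B, if_false, pre_map, Finset.prod_map]
    rfl
  · rw [ev, Finset.mul_sum]
    apply Fintype.sum_congr
    intro B
    rw [comb]
    simp only [Finset.mem_insert_self, if_true, Finset.erase_insert (last_not_mem_map B),
      pre_map]
    rw [Finset.prod_insert (last_not_mem_map B), Finset.prod_map]
    have hpp : ∀ x : Fin d, p (Fin.castSuccEmb x) = (p ∘ Fin.castSucc) x := fun _ => rfl
    simp only [hpp]
    ring

lemma comb_deg {d L : ℕ} (cg ch : Finset (Fin d) → ZMod 2)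
    (hg : ∀ B, L + 1 < B.card → cg B = 0) (hh : ∀ B, L < B.card → ch B = 0) :
    ∀ A : Finset (Fin (d + 1)), L + 1 < A.card → comb cg ch A = 0 := by
  classical
  intro A hA
  rw [comb]
  split_ifs with h
  · apply hh
    have h1 : ((pre (A.erase (Fin.last d))).map Fin.castSuccEmb).card = (A.erase (Fin.last d)).card := by
      rw [map_pre _ (Finset.notMem_erase _ _)]
    rw [Finset.card_map] at h1
    rw [h1, Finset.card_erase_of_mem h]
    omega
  · apply hg
    have h1 : ((pre A).map Fin.castSuccEmb).card = A.card := by rw [map_pre _ h]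
    rw [Finset.card_map] at h1
    omega

lemma zmod2_cases : ∀ x : ZMod 2, x = 0 ∨ x = 1 := by decide

lemma ev_const {d : ℕ} (v : ZMod 2) (p : Fin d → ZMod 2) :
    ev (fun A => if A = ∅ then v else 0) p = v := by
  classical
  rw [ev, Fintype.sum_eq_single (∅ : Finset (Fin d))]
  · simp
  · intro b hb; simp [hb]

/-- interpolation: any function on at most `2^L` points of `F_2^d` is matched by
a polynomial of degree at most `L`. -/
lemma interp (d : ℕ) : ∀ L : ℕ, ∀ S : Finset (Fin d → ZMod 2), S.card ≤ 2 ^ L →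
    ∀ φ : (Fin d → ZMod 2) → ZMod 2,
    ∃ c : Finset (Fin d) → ZMod 2,
      (∀ A, L < A.card → c A = 0) ∧ ∀ p ∈ S, ev c p = φ p := by
  classical
  induction d with
  | zero =>
    intro L S _ φ
    refine ⟨fun A => if A = ∅ then φ (fun i => i.elim0) else 0, fun A hA => ?_, fun p hp => ?_⟩
    · have : A = ∅ := Finset.eq_empty_of_forall_notMem (fun x => x.elim0)
      subst this
      simp at hA
    · have hp0 : p = fun i => i.elim0 := funext fun i => i.elim0
      rw [ev_const, hp0]
  | succ d ih =>
    intro L S hS φ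
    by_cases hS1 : S.card ≤ 1
    · -- at most one point: constant interpolation
      refine ⟨fun A => if A = ∅ then (if h : S.Nonempty then φ h.choose else 0) else 0,
        fun A hA => ?_, fun p hp => ?_⟩
      · have hA0 : A ≠ ∅ ∨ A = ∅ := (ne_or_eq _ _)
        rcases hA0 with h | h
        · simp [h]
        · subst h; simp at hA
      · have hne : S.Nonempty := ⟨p, hp⟩
        rw [ev_const]
        have : hne.choose = p := by
          have h1 := hne.choose_spec
          have := Finset.card_le_one.mp hS1 _ h1 _ hp
          exact this
        rw [dif_pos hne, this]
    · -- at least two points, so L ≥ 1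
      have hL : L ≠ 0 := by
        intro h; rw [h] at hS; simp at hS; omega
      obtain ⟨L', rfl⟩ : ∃ L', L = L' + 1 := ⟨L - 1, by omega⟩
      set S0 := S.filter (fun p => p (Fin.last d) = 0) with hS0def
      set S1 := S.filter (fun p => ¬ (p (Fin.last d) = 0)) with hS1def
      have hsplit : S0.card + S1.card = S.card :=
        Finset.card_filter_add_card_filter_not _
      have hhalf : S0.card ≤ 2 ^ L' ∨ S1.card ≤ 2 ^ L' := by
        by_contra h
        push_neg at h
        have := hsplit ▸ hS
        rw [pow_succ] at this
        omega
      set R0 := S0.image (fun p => p ∘ Fin.castSucc) with hR0def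
      set R1 := S1.image (fun p => p ∘ Fin.castSucc) with hR1def
      have hR0card : R0.card ≤ S0.card := Finset.card_image_le
      have hR1card : R1.card ≤ S1.card := Finset.card_image_le
      have hmemR0 : ∀ p ∈ S, p (Fin.last d) = 0 → (p ∘ Fin.castSucc) ∈ R0 := by
        intro p hp hb
        exact Finset.mem_image_of_mem _ (Finset.mem_filter.mpr ⟨hp, hb⟩)
      have hmemR1 : ∀ p ∈ S, p (Fin.last d) = 1 → (p ∘ Fin.castSucc) ∈ R1 := by
        intro p hp hb
        refine Finset.mem_image_of_mem _ (Finset.mem_filter.mpr ⟨hp, ?_⟩)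
        rw [hb]; decide
      have hsnoc : ∀ p : Fin (d + 1) → ZMod 2,
          Fin.snoc (p ∘ Fin.castSucc) (p (Fin.last d)) = p := fun p => Fin.snoc_init_self p
      rcases hhalf with hc0 | hc1
      · -- |S0| small : f = g + (1 + x_last) h , g interpolates on R1
        obtain ⟨cg, hcgdeg, hcg⟩ := ih (L' + 1) R1
          (le_trans hR1card (by omega)) (fun r => φ (Fin.snoc r 1))
        obtain ⟨ch, hchdeg, hch⟩ := ih L' R0
          (le_trans hR0card hc0) (fun r => φ (Fin.snoc r 0) + ev cg r)
        refine ⟨comb (fun B => cg B + ch B) ch,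
          comb_deg _ _ (fun B hB => by
            rw [hcgdeg B hB, hchdeg B (by omega), add_zero]) hchdeg, fun p hp => ?_⟩
        rw [ev_comb, ev_add]
        rcases zmod2_cases (p (Fin.last d)) with hb | hb
        · rw [hb, hch _ (hmemR0 p hp hb)]
          have : Fin.snoc (p ∘ Fin.castSucc) (0 : ZMod 2) = p := by rw [← hb]; exact hsnoc p
          rw [this]
          generalize φ p = a; generalize ev cg (p ∘ Fin.castSucc) = b
          revert a b; decide
        · rw [hb, hcg _ (hmemR1 p hp hb)]
          have : Fin.snoc (p ∘ Fin.castSucc) (1 : ZMod 2) = p := by rw [← hb]; exact hsnoc p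
          rw [this]
          generalize φ p = a; generalize ev ch (p ∘ Fin.castSucc) = b
          revert a b; decide
      · -- |S1| small : f = g + x_last h , g interpolates on R0
        obtain ⟨cg, hcgdeg, hcg⟩ := ih (L' + 1) R0
          (le_trans hR0card (by omega)) (fun r => φ (Fin.snoc r 0))
        obtain ⟨ch, hchdeg, hch⟩ := ih L' R1
          (le_trans hR1card hc1) (fun r => φ (Fin.snoc r 1) + ev cg r)
        refine ⟨comb cg ch, comb_deg _ _ hcgdeg hchdeg, fun p hp => ?_⟩
        rw [ev_comb]
        rcases zmod2_cases (p (Fin.last d)) with hb | hb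
        · rw [hb, hcg _ (hmemR0 p hp hb)]
          have : Fin.snoc (p ∘ Fin.castSucc) (0 : ZMod 2) = p := by rw [← hb]; exact hsnoc p
          rw [this]
          generalize φ p = a; generalize ev ch (p ∘ Fin.castSucc) = b
          revert a b; decide
        · rw [hb, hch _ (hmemR1 p hp hb)]
          have : Fin.snoc (p ∘ Fin.castSucc) (1 : ZMod 2) = p := by rw [← hb]; exact hsnoc p
          rw [this]
          generalize φ p = a; generalize ev cg (p ∘ Fin.castSucc) = b
          revert a b; decide

lemma evalC_eq_ev {d L : ℕ} (c : Finset (Fin d) → ZMod 2)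
    (hc : ∀ A, L < A.card → c A = 0) (p : Fin d → ZMod 2) :
    evalC (fun A : {S : Finset (Fin d) // S.card ≤ L} => c A.1) p = ev c p := by
  classical
  rw [evalC, ev]
  rw [← Finset.sum_filter_add_sum_filter_not Finset.univ (fun A : Finset (Fin d) => A.card ≤ L)]
  have h2 : ∑ A ∈ Finset.univ.filter (fun A : Finset (Fin d) => ¬ A.card ≤ L),
      c A * ∏ i ∈ A, p i = 0 := by
    apply Finset.sum_eq_zero
    intro A hA
    rw [Finset.mem_filter] at hA
    rw [hc A (by omega), zero_mul]
  rw [h2, add_zero]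
  exact (Finset.sum_subtype (Finset.univ.filter (fun A : Finset (Fin d) => A.card ≤ L))
    (fun A => by simp only [Finset.mem_filter, Finset.mem_univ, true_and])
    (fun A => c A * ∏ i ∈ A, p i)).symm

lemma eval_surj {d L : ℕ} (S : Finset (Fin d → ZMod 2)) (hS : S.card ≤ 2 ^ L) :
    Function.Surjective (fun (c : CoefSp d L) (p : S) => evalC c p.1) := by
  intro φ
  classical
  obtain ⟨c, hdeg, hc⟩ := interp d L S hS
    (fun p => if h : p ∈ S then φ ⟨p, h⟩ else 0)
  refine ⟨fun A => c A.1, funext fun p => ?_⟩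
  show evalC (fun A => c A.1) p.1 = φ p
  rw [evalC_eq_ev c hdeg, hc p.1 p.2, dif_pos p.2]

/-- fibre counting for surjective additive maps between finite groups -/
lemma count_fiber {α β : Type*} [Fintype α] [Fintype β] [DecidableEq β]
    [AddCommGroup α] [AddCommGroup β] (f : α →+ β) (hsurj : Function.Surjective f)
    (P : β → Prop) [DecidablePred P] :
    Nat.card {x : α // P (f x)} * Fintype.card β
      = Nat.card {y : β // P y} * Fintype.card α := by
  classical
  have hfib : ∀ b : β, (Finset.univ.filter (fun x : α => f x = b)).card
      = (Finset.univ.filter (fun x : α => f x = 0)).card := by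
    intro b
    obtain ⟨x₀, hx₀⟩ := hsurj b
    apply Finset.card_bij (fun x _ => x - x₀)
    · intro x hx
      rw [Finset.mem_filter] at hx ⊢
      rw [map_sub, hx.2, hx₀, sub_self]
      exact ⟨Finset.mem_univ _, rfl⟩
    · intro x hx y hy h
      exact sub_left_injective h
    · intro y hy
      rw [Finset.mem_filter] at hy
      refine ⟨y + x₀, Finset.mem_filter.mpr ⟨Finset.mem_univ _, ?_⟩, by abel⟩
      rw [map_add, hy.2, hx₀, zero_add]
  have key : ∀ Q : β → Prop, ∀ _ : DecidablePred Q,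
      (Finset.univ.filter (fun x : α => Q (f x))).card
        = (Finset.univ.filter Q).card * (Finset.univ.filter (fun x : α => f x = 0)).card := by
    intro Q _
    rw [Finset.card_eq_sum_card_fiberwise
      (f := f) (t := Finset.univ.filter Q) (fun x hx => Finset.mem_filter.mpr
        ⟨Finset.mem_univ _, (Finset.mem_filter.mp hx).2⟩)]
    have hsum : ∑ b ∈ Finset.univ.filter Q,
        ((Finset.univ.filter fun x : α => Q (f x)).filter fun x => f x = b).card
        = ∑ _b ∈ Finset.univ.filter Q, (Finset.univ.filter (fun x : α => f x = 0)).card := by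
      apply Finset.sum_congr rfl
      intro b hb
      rw [← hfib b]
      congr 1
      ext x
      simp only [Finset.mem_filter, Finset.mem_univ, true_and]
      constructor
      · exact fun h => h.2
      · intro h
        refine ⟨by rw [h]; exact (Finset.mem_filter.mp hb).2, h⟩
    rw [hsum, Finset.sum_const, smul_eq_mul]
  have h1 : Nat.card {x : α // P (f x)} = (Finset.univ.filter (fun x : α => P (f x))).card := by
    rw [Nat.card_eq_fintype_card, Fintype.card_subtype]
  have h2 : Nat.card {y : β // P y} = (Finset.univ.filter P).card := by
    rw [Nat.card_eq_fintype_card, Fintype.card_subtype]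
  have h3 : Fintype.card α
      = (Finset.univ.filter (fun _ : β => True)).card
        * (Finset.univ.filter (fun x : α => f x = 0)).card := by
    have := key (fun _ => True) inferInstance
    simpa using this
  have h4 : (Finset.univ.filter (fun _ : β => True)).card = Fintype.card β := by simp
  rw [h1, h2, key P inferInstance, h3, h4]
  ring

section BadCount

variable {T V : Type*} [Fintype T] [LinearOrder T] [Fintype V] [DecidableEq V]

/-- canonical (minimal) preimage of `g p` under `g`. -/
noncomputable def mfib (g : T → V) (p : T) : T :=
  (Finset.univ.filter (fun p' => g p' = g p)).min' ⟨p, by simp⟩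

lemma mfib_mem (g : T → V) (p : T) : g (mfib g p) = g p := by
  have := Finset.min'_mem (Finset.univ.filter (fun p' => g p' = g p)) ⟨p, by simp⟩
  exact (Finset.mem_filter.mp this).2

lemma mfib_congr (g : T → V) {p q : T} (h : g p = g q) : mfib g p = mfib g q := by
  unfold mfib
  congr 1
  ext p'
  simp [h]

lemma mfib_idem (g : T → V) (p : T) : mfib g (mfib g p) = mfib g p := by
  rw [mfib_congr g (mfib_mem g p)]

lemma image_card_add (g : T → V) :
    (Finset.univ.image g).card
      + (Finset.univ.filter (fun p => mfib g p ≠ p)).card = Fintype.card T := by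
  classical
  have h1 : (Finset.univ.filter (fun p => mfib g p = p)).card
      = (Finset.univ.image g).card := by
    apply Finset.card_bij (fun p _ => g p)
    · intro p _
      exact Finset.mem_image_of_mem _ (Finset.mem_univ _)
    · intro p₁ h₁ p₂ h₂ h
      rw [Finset.mem_filter] at h₁ h₂
      rw [← h₁.2, ← h₂.2, mfib_congr g h]
    · intro v hv
      obtain ⟨p, -, rfl⟩ := Finset.mem_image.mp hv
      exact ⟨mfib g p, Finset.mem_filter.mpr ⟨Finset.mem_univ _, mfib_idem g p⟩, mfib_mem g p⟩
  rw [← h1, Finset.card_filter_add_card_filter_not (fun p => mfib g p = p)]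
  exact Finset.card_univ

noncomputable def Phi (k : ℕ) (g : Fin k → T → V) : Fin k × T → T ⊕ V := fun pos =>
  if mfib (g pos.1) pos.2 ≠ pos.2 then Sum.inl (mfib (g pos.1) pos.2)
  else Sum.inr (g pos.1 pos.2)

noncomputable def cntL {k : ℕ} (h : Fin k × T → T ⊕ V) : ℕ :=
  (Finset.univ.filter (fun pos => (h pos).isLeft)).card

lemma Phi_injective (k : ℕ) : Function.Injective (Phi (T := T) (V := V) k) := by
  intro g g' h
  funext i p
  have happ := congrFun h (i, p)
  simp only [Phi] at happ
  by_cases h1 : mfib (g i) p = p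
  · by_cases h2 : mfib (g' i) p = p
    · rw [if_neg (by simp [h1]), if_neg (by simp [h2])] at happ
      exact Sum.inr.inj happ
    · rw [if_neg (by simp [h1]), if_pos h2] at happ
      exact absurd happ (by simp)
  · by_cases h2 : mfib (g' i) p = p
    · rw [if_pos h1, if_neg (by simp [h2])] at happ
      exact absurd happ (by simp)
    · rw [if_pos h1, if_pos h2] at happ
      have hp₀ : mfib (g i) p = mfib (g' i) p := Sum.inl.inj happ
      have happ0 := congrFun h (i, mfib (g i) p)
      simp only [Phi] at happ0
      have e1 : mfib (g i) (mfib (g i) p) = mfib (g i) p := mfib_idem _ _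
      have e2 : mfib (g' i) (mfib (g i) p) = mfib (g i) p := by
        rw [hp₀, mfib_idem]
      rw [if_neg (by simp [e1]), if_neg (by simp [e2])] at happ0
      have hval := Sum.inr.inj happ0
      calc g i p = g i (mfib (g i) p) := (mfib_mem _ _).symm
        _ = g' i (mfib (g i) p) := hval
        _ = g' i (mfib (g' i) p) := by rw [← hp₀]
        _ = g' i p := mfib_mem _ _

lemma bad_count (k B : ℕ) (x : ℝ) (hx : 1 ≤ x) :
    (Nat.card {g : Fin k → T → V //
        (∑ i, (Finset.univ.image (g i)).card) + B ≤ k * Fintype.card T} : ℝ) * x ^ B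
      ≤ (Fintype.card V + Fintype.card T * x) ^ (k * Fintype.card T) := by
  classical
  have hcntPhi : ∀ g : Fin k → T → V,
      (∑ i, (Finset.univ.image (g i)).card) + B ≤ k * Fintype.card T →
      B ≤ cntL (Phi k g) := by
    intro g hg
    have h1 : cntL (Phi k g)
        = ∑ i, (Finset.univ.filter (fun p => mfib (g i) p ≠ p)).card := by
      rw [cntL, Finset.card_filter, Fintype.sum_prod_type]
      apply Fintype.sum_congr
      intro i
      rw [Finset.card_filter]
      apply Fintype.sum_congr
      intro p
      by_cases hh : mfib (g i) p ≠ p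
      · rw [if_pos hh, if_pos (by simp [Phi, hh])]
      · rw [if_neg hh, if_neg (by simp [Phi, hh])]
    have h2 : (∑ i, (Finset.univ.image (g i)).card)
        + (∑ i : Fin k, (Finset.univ.filter (fun p => mfib (g i) p ≠ p)).card)
        = k * Fintype.card T := by
      rw [← Finset.sum_add_distrib,
        Finset.sum_congr rfl (fun i _ => image_card_add (g i))]
      simp [Finset.sum_const, mul_comm]
    omega
  set H : Finset (Fin k × T → T ⊕ V) := Finset.univ.filter (fun h => B ≤ cntL h) with hH
  have hcard : Nat.card {g : Fin k → T → V //
      (∑ i, (Finset.univ.image (g i)).card) + B ≤ k * Fintype.card T} ≤ H.card := by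
    rw [Nat.card_eq_fintype_card, Fintype.card_subtype]
    apply Finset.card_le_card_of_injOn (Phi k)
    · intro g hg
      rw [Finset.mem_coe, Finset.mem_filter] at hg ⊢
      exact ⟨Finset.mem_univ _, hcntPhi g hg.2⟩
    · exact (Phi_injective k).injOn
  have hx0 : (0:ℝ) < x := lt_of_lt_of_le one_pos hx
  set wt : T ⊕ V → ℝ := Sum.elim (fun _ => x) (fun _ => 1) with hwt
  have hprod : ∀ h : Fin k × T → T ⊕ V, ∏ pos, wt (h pos) = x ^ cntL h := by
    intro h
    rw [← Finset.prod_filter_mul_prod_filter_not Finset.univ (fun pos => (h pos).isLeft)]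
    have e1 : ∀ pos ∈ Finset.univ.filter (fun pos => (h pos).isLeft), wt (h pos) = x := by
      intro pos hpos
      rw [Finset.mem_filter] at hpos
      rcases hom : h pos with a | b
      · simp [hwt]
      · rw [hom] at hpos; simp at hpos
    have e2 : ∀ pos ∈ Finset.univ.filter (fun pos => ¬ (h pos).isLeft), wt (h pos) = 1 := by
      intro pos hpos
      rw [Finset.mem_filter] at hpos
      rcases hom : h pos with a | b
      · rw [hom] at hpos; simp at hpos
      · simp [hwt]
    rw [Finset.prod_congr rfl e1, Finset.prod_congr rfl e2, Finset.prod_const,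
      Finset.prod_const, one_pow, mul_one, cntL]
  have htot : ∑ h : Fin k × T → T ⊕ V, x ^ cntL h
      = (Fintype.card T * x + Fintype.card V) ^ (k * Fintype.card T) := by
    rw [Fintype.sum_congr _ _ (fun h => (hprod h).symm)]
    rw [← Fintype.piFinset_univ, ← Finset.prod_univ_sum]
    rw [Finset.prod_const]
    congr 1
    · rw [Fintype.sum_sum_type]
      simp [hwt, mul_comm]
    · simp [Finset.card_univ, mul_comm]
  calc (Nat.card {g : Fin k → T → V //
        (∑ i, (Finset.univ.image (g i)).card) + B ≤ k * Fintype.card T} : ℝ) * x ^ B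
      ≤ (H.card : ℝ) * x ^ B := by
        apply mul_le_mul_of_nonneg_right _ (le_of_lt (pow_pos hx0 B))
        exact_mod_cast hcard
    _ = ∑ _h ∈ H, x ^ B := by rw [Finset.sum_const, nsmul_eq_mul]
    _ ≤ ∑ h ∈ H, x ^ cntL h := by
        apply Finset.sum_le_sum
        intro h hh
        rw [hH, Finset.mem_filter] at hh
        exact pow_le_pow_right₀ hx hh.2
    _ ≤ ∑ h : Fin k × T → T ⊕ V, x ^ cntL h := by
        apply Finset.sum_le_sum_of_subset_of_nonneg (Finset.subset_univ H)
        intro h _ _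
        exact le_of_lt (pow_pos hx0 _)
    _ = (Fintype.card T * x + Fintype.card V) ^ (k * Fintype.card T) := htot
    _ = (Fintype.card V + Fintype.card T * x) ^ (k * Fintype.card T) := by rw [add_comm]

end BadCount

section Bits

lemma bits_lemma (b : ℕ → ℕ) (hb : ∀ t, b t ≤ 1) (w : ℕ) :
    (∑ t ∈ Finset.range w, 2 ^ t * b t) < 2 ^ w ∧
    ∀ u < w, Nat.testBit (∑ t ∈ Finset.range w, 2 ^ t * b t) u = decide (b u = 1) := by
  induction w with
  | zero => simp
  | succ w ih =>
    rw [Finset.sum_range_succ]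
    constructor
    · have h1 := ih.1
      have h2 := hb w
      have : 2 ^ w * b w ≤ 2 ^ w := by nlinarith [pow_pos (by norm_num : (0:ℕ) < 2) w]
      rw [pow_succ]
      omega
    · intro u hu
      rcases Nat.lt_succ_iff_lt_or_eq.mp hu with h | rfl
      · have hmod : (∑ t ∈ Finset.range w, 2 ^ t * b t + 2 ^ w * b w) % 2 ^ w
            = ∑ t ∈ Finset.range w, 2 ^ t * b t := by
          rw [Nat.mul_comm (2^w) (b w), Nat.add_mul_mod_self_right,
            Nat.mod_eq_of_lt ih.1]
        have := Nat.testBit_mod_two_pow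
          (∑ t ∈ Finset.range w, 2 ^ t * b t + 2 ^ w * b w) w u
        rw [hmod, decide_eq_true h, Bool.true_and] at this
        rw [← this, ih.2 u h]
      · rw [Nat.testBit_eq_decide_div_mod_eq]
        have hdiv : (∑ t ∈ Finset.range u, 2 ^ t * b t + 2 ^ u * b u) / 2 ^ u = b u := by
          rw [Nat.mul_comm, Nat.add_mul_div_right _ _ (pow_pos (by norm_num) u),
            Nat.div_eq_of_lt ih.1, zero_add]
        rw [hdiv, Nat.mod_eq_of_lt (by have := hb u; omega)]

/-- numeric encoding of a column pattern -/
def encB (w : ℕ) (q : Fin w → ZMod 2) : ℕ := ∑ t : Fin w, 2 ^ (t : ℕ) * (q t).val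

lemma encB_eq_range (w : ℕ) (q : Fin w → ZMod 2) :
    encB w q = ∑ t ∈ Finset.range w, 2 ^ t * (if h : t < w then (q ⟨t, h⟩).val else 0) := by
  rw [encB, Finset.sum_range]
  apply Fintype.sum_congr
  intro t
  rw [dif_pos t.2]

lemma bval (w : ℕ) (q : Fin w → ZMod 2) :
    ∀ t, (if h : t < w then (q ⟨t, h⟩).val else 0) ≤ 1 := by
  intro t
  split_ifs with h
  · exact Nat.lt_succ_iff.mp (ZMod.val_lt _)
  · exact Nat.zero_le 1

lemma encB_lt (w : ℕ) (q : Fin w → ZMod 2) : encB w q < 2 ^ w := by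
  rw [encB_eq_range]
  exact (bits_lemma _ (bval w q) w).1

lemma encB_testBit (w : ℕ) (q : Fin w → ZMod 2) (u : ℕ) (hu : u < w) :
    (if Nat.testBit (encB w q) u then (1 : ZMod 2) else 0) = q ⟨u, hu⟩ := by
  rw [encB_eq_range]
  rw [(bits_lemma _ (bval w q) w).2 u hu]
  rw [dif_pos hu]
  rcases zmod2_cases (q ⟨u, hu⟩) with h | h <;> rw [h] <;> simp [ZMod.val_one]

lemma encB_injective (w : ℕ) : Function.Injective (encB w) := by
  intro q q' h
  funext u
  have h1 := encB_testBit w q u u.2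
  have h2 := encB_testBit w q' u u.2
  rw [h] at h1
  rw [Fin.eta] at h1 h2
  rw [← h1, ← h2]

end Bits

/-- lower bound on `orWeight` by the sum of per-block image sizes -/
lemma sum_image_le_orWeight {n L k w d : ℕ} (hkw : k * 2 ^ w ≤ n)
    (c : Fin k → Fin w → CoefSp d L) (T : Finset (Fin d → ZMod 2)) :
    (∑ i : Fin k, (T.image (fun p (t : Fin w) => evalC (c i t) p)).card)
      ≤ orWeight (Gof n L k w d c) T := by
  classical
  -- the encoding map into columns
  have hlt : ∀ (i : Fin k) (q : Fin w → ZMod 2), (i : ℕ) * 2 ^ w + encB w q < n := by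
    intro i q
    have h1 : (i : ℕ) + 1 ≤ k := i.2
    have h2 := encB_lt w q
    calc (i : ℕ) * 2 ^ w + encB w q < ((i : ℕ) + 1) * 2 ^ w := by rw [add_mul, one_mul]; omega
      _ ≤ k * 2 ^ w := Nat.mul_le_mul_right _ h1
      _ ≤ n := hkw
  set emap : (Σ _i : Fin k, (Fin w → ZMod 2)) → Fin n :=
    fun x => ⟨(x.1 : ℕ) * 2 ^ w + encB w x.2, hlt x.1 x.2⟩ with hemap
  have hdiv : ∀ (i : Fin k) (q : Fin w → ZMod 2),
      ((i : ℕ) * 2 ^ w + encB w q) / 2 ^ w = (i : ℕ) := by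
    intro i q
    rw [add_comm, Nat.add_mul_div_right _ _ (pow_pos (by norm_num) w),
      Nat.div_eq_of_lt (encB_lt w q), zero_add]
  have hmod : ∀ (i : Fin k) (q : Fin w → ZMod 2),
      ((i : ℕ) * 2 ^ w + encB w q) % 2 ^ w = encB w q := by
    intro i q
    rw [add_comm, Nat.add_mul_mod_self_right, Nat.mod_eq_of_lt (encB_lt w q)]
  have hinj : Function.Injective emap := by
    rintro ⟨i, q⟩ ⟨i', q'⟩ h
    rw [hemap] at h
    have hval : (i : ℕ) * 2 ^ w + encB w q = (i' : ℕ) * 2 ^ w + encB w q' :=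
      congrArg Fin.val h
    have hi : (i : ℕ) = (i' : ℕ) := by
      rw [← hdiv i q, ← hdiv i' q', hval]
    have hq : encB w q = encB w q' := by
      have := hmod i q
      rw [hval, hmod i' q'] at this
      exact this.symm
    exact Sigma.ext (Fin.ext hi) (heq_of_eq (encB_injective w hq))
  -- the live column set
  set live : Finset (Fin n) :=
    Finset.univ.filter (fun j => ∃ p ∈ T, Gof n L k w d c p j ≠ 0) with hlive
  have horw : orWeight (Gof n L k w d c) T = live.card := by
    rw [orWeight, hlive, Nat.card_eq_fintype_card, Fintype.card_subtype]
  set Sig : Finset (Σ _i : Fin k, (Fin w → ZMod 2)) :=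
    Finset.univ.sigma (fun i => T.image (fun p (t : Fin w) => evalC (c i t) p)) with hSig
  have hcard : Sig.card = ∑ i : Fin k, (T.image (fun p (t : Fin w) => evalC (c i t) p)).card := by
    rw [hSig, Finset.card_sigma]
  have hsub : Sig.image emap ⊆ live := by
    intro j hj
    obtain ⟨⟨i, q⟩, hmem, rfl⟩ := Finset.mem_image.mp hj
    rw [hSig, Finset.mem_sigma] at hmem
    obtain ⟨p, hpT, hpq⟩ := Finset.mem_image.mp hmem.2
    rw [hlive, Finset.mem_filter]
    refine ⟨Finset.mem_univ _, p, hpT, ?_⟩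
    rw [Gof]
    rw [if_pos]
    · exact one_ne_zero
    constructor
    · show (i : ℕ) * 2 ^ w + encB w q < k * 2 ^ w
      have h2 := encB_lt w q
      have h1 : (i : ℕ) + 1 ≤ k := i.2
      calc (i : ℕ) * 2 ^ w + encB w q < ((i : ℕ) + 1) * 2 ^ w := by rw [add_mul, one_mul]; omega
        _ ≤ k * 2 ^ w := Nat.mul_le_mul_right _ h1
    · intro t ht
      have hpq' : (fun tt : Fin w => evalC (c i tt) p) = q := hpq
      show evalC (cExt c (((i : ℕ) * 2 ^ w + encB w q) / 2 ^ w) t) p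
        = if Nat.testBit (((i : ℕ) * 2 ^ w + encB w q) % 2 ^ w) t then 1 else 0
      rw [hdiv i q, hmod i q, encB_testBit w q t ht]
      unfold cExt
      rw [dif_pos ⟨i.2, ht⟩]
      simp only [Fin.eta]
      exact congrFun hpq' ⟨t, ht⟩
  calc ∑ i : Fin k, (T.image (fun p (t : Fin w) => evalC (c i t) p)).card
      = Sig.card := hcard.symm
    _ = (Sig.image emap).card := (Finset.card_image_of_injective Sig hinj).symm
    _ ≤ live.card := Finset.card_le_card hsub
    _ = orWeight (Gof n L k w d c) T := horw.symm

lemma evalC_add {d L : ℕ} (c c' : CoefSp d L) (p : Fin d → ZMod 2) :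
    evalC (c + c') p = evalC c p + evalC c' p := by
  rw [evalC, evalC, evalC, ← Finset.sum_add_distrib]
  apply Fintype.sum_congr
  intro S
  rw [Pi.add_apply, add_mul]

/-- per-T counting bound, transported from the evaluation space to coefficient space. -/
lemma perT_bound {d L k w : ℕ} (hL1 : 1 ≤ (L : ℝ))
    (T : Finset (Fin d → ZMod 2)) (hT : T.card ≤ 2 ^ L) (B : ℕ) :
    (Nat.card {c : Fin k → Fin w → CoefSp d L //
        (∑ i : Fin k, (T.image (fun p (t : Fin w) => evalC (c i t) p)).card) + B
          ≤ k * T.card} : ℝ)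
      ≤ (Nat.card (Fin k → Fin w → CoefSp d L) : ℝ)
        * ((2 ^ w + T.card * L : ℝ) ^ (k * T.card))
        / (((2 : ℝ) ^ w) ^ (k * T.card) * (L : ℝ) ^ B) := by
  classical
  letI : LinearOrder {x // x ∈ T} :=
    LinearOrder.lift' (Fintype.equivFin {x // x ∈ T}) (Fintype.equivFin _).injective
  set E : (Fin k → Fin w → CoefSp d L) →+ (Fin k → {x // x ∈ T} → (Fin w → ZMod 2)) :=
    AddMonoidHom.mk'
    (fun c i x t => evalC (c i t) x.1)
    (by
      intro c c'
      funext i x t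
      exact evalC_add (c i t) (c' i t) x.1) with hE
  have hEsurj : Function.Surjective E := by
    intro y
    refine ⟨fun i t => (eval_surj T hT (fun x => y i x t)).choose, ?_⟩
    funext i x t
    have := (eval_surj T hT (fun x => y i x t)).choose_spec
    exact congrFun this x
  set P : (Fin k → {x // x ∈ T} → (Fin w → ZMod 2)) → Prop := fun y =>
    (∑ i : Fin k, ((Finset.univ.image (y i)).card)) + B
      ≤ k * Fintype.card {x // x ∈ T}
    with hP
  have hfib := count_fiber E hEsurj P
  -- identify the coefficient-side subtype
  have himg : ∀ f : (Fin d → ZMod 2) → (Fin w → ZMod 2),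
      (Finset.univ.image (fun x : {x // x ∈ T} => f x.1)) = T.image f := by
    intro f
    rw [Finset.univ_eq_attach, show (fun x : {x // x ∈ T} => f x.1) = f ∘ Subtype.val from rfl,
      ← Finset.image_image, Finset.attach_image_val]
  have hpred : ∀ c : (Fin k → Fin w → CoefSp d L), P (E c) ↔
      (∑ i : Fin k, (T.image (fun p (t : Fin w) => evalC (c i t) p)).card) + B
        ≤ k * T.card := by
    intro c
    rw [hP]
    simp only []
    rw [Fintype.card_coe]
    have hsum : (∑ i : Fin k, ((Finset.univ.image (E c i)).card))
        = ∑ i : Fin k, (T.image (fun p (t : Fin w) => evalC (c i t) p)).card := by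
      apply Fintype.sum_congr
      intro i
      rw [← himg (fun p (t : Fin w) => evalC (c i t) p)]
      rfl
    rw [hsum]
  have hcardid : Nat.card {c : (Fin k → Fin w → CoefSp d L) // P (E c)}
      = Nat.card {c : (Fin k → Fin w → CoefSp d L) //
      (∑ i : Fin k, (T.image (fun p (t : Fin w) => evalC (c i t) p)).card) + B
        ≤ k * T.card} :=
    Nat.card_congr (Equiv.subtypeEquivRight hpred)
  -- cardinality of the evaluation space
  have hcardτ : Fintype.card (Fin k → {x // x ∈ T} → (Fin w → ZMod 2))
      = (2 ^ w) ^ (k * T.card) := by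
    rw [Fintype.card_fun, Fintype.card_fun, Fintype.card_fun]
    rw [ZMod.card 2, Fintype.card_fin, Fintype.card_coe, Fintype.card_fin]
    rw [← pow_mul, mul_comm (T.card) k]
  -- the abstract counting bound
  have hbc := bad_count (T := {x // x ∈ T}) (V := (Fin w → ZMod 2)) k B (L : ℝ) hL1
  have hcardV : ((Fintype.card (Fin w → ZMod 2) : ℕ) : ℝ) = (2 : ℝ) ^ w := by
    rw [Fintype.card_fun, ZMod.card 2, Fintype.card_fin]
    push_cast
    ring
  rw [hcardV] at hbc
  -- combine
  rw [le_div_iff₀ (by positivity)]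
  have hℕ : (Nat.card {c : (Fin k → Fin w → CoefSp d L) //
      (∑ i : Fin k, (T.image (fun p (t : Fin w) => evalC (c i t) p)).card) + B
        ≤ k * T.card} : ℝ) * ((2:ℝ) ^ w) ^ (k * T.card)
      = (Nat.card {y : (Fin k → {x // x ∈ T} → (Fin w → ZMod 2)) // P y} : ℝ)
        * (Nat.card (Fin k → Fin w → CoefSp d L) : ℝ) := by
    rw [← hcardid]
    have h2 : ((2:ℝ) ^ w) ^ (k * T.card)
        = ((Fintype.card (Fin k → {x // x ∈ T} → (Fin w → ZMod 2)) : ℕ) : ℝ) := by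
      rw [hcardτ]; push_cast; ring
    rw [h2]
    rw [Nat.card_eq_fintype_card
      (α := (Fin k → Fin w → CoefSp d L))] 
    exact_mod_cast congrArg (fun x : ℕ => (x : ℝ)) hfib
  calc (Nat.card {c : (Fin k → Fin w → CoefSp d L) //
        (∑ i : Fin k, (T.image (fun p (t : Fin w) => evalC (c i t) p)).card) + B
          ≤ k * T.card} : ℝ) * (((2:ℝ) ^ w) ^ (k * T.card) * (L : ℝ) ^ B)
      = ((Nat.card {y : (Fin k → {x // x ∈ T} → (Fin w → ZMod 2)) // P y} : ℝ)
          * (L : ℝ) ^ B) * (Nat.card (Fin k → Fin w → CoefSp d L) : ℝ) := by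
        rw [← mul_assoc, hℕ]; ring
    _ ≤ ((2 ^ w + (Fintype.card {x // x ∈ T}) * L : ℝ) ^ (k * Fintype.card {x // x ∈ T}))
          * (Nat.card (Fin k → Fin w → CoefSp d L) : ℝ) := by
        apply mul_le_mul_of_nonneg_right _ (Nat.cast_nonneg _)
        exact hbc
    _ = ((2 ^ w + T.card * L : ℝ) ^ (k * T.card))
          * (Nat.card (Fin k → Fin w → CoefSp d L) : ℝ) := by
        rw [Fintype.card_coe]
    _ = (Nat.card (Fin k → Fin w → CoefSp d L) : ℝ)
          * ((2 ^ w + T.card * L : ℝ) ^ (k * T.card)) := by ring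

/-- master counting bound for a single `n`. -/
lemma master_bound (n L k w d : ℕ)
    (hL16 : 16 ≤ L)
    (hk1 : 1 ≤ k)
    (hkn : k * 2 ^ w ≤ n)
    (hwL : 2 ^ w ≤ 2 ^ L)
    (hΔ : (d : ℝ) * Real.log 2 + k / L + 2 * L ≤ (k / Real.sqrt L) * Real.log L) :
    (Nat.card {c : Fin k → Fin w → CoefSp d L //
        ¬ IsExpander (Gof n L k w d c) (1 - 1 / Real.sqrt L) k (2 ^ w / L ^ 2)} : ℝ)
      ≤ Real.exp (-(L : ℝ)) * (Nat.card (Fin k → Fin w → CoefSp d L) : ℝ) := by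
  classical
  have hL0 : (0:ℝ) < L := by positivity
  have hL1 : (1:ℝ) ≤ L := by exact_mod_cast le_trans (by norm_num) hL16
  have hsqrtpos : (0:ℝ) < Real.sqrt L := Real.sqrt_pos.mpr hL0
  have hlogL : (0:ℝ) ≤ Real.log L := Real.log_nonneg hL1
  set t : ℕ := 2 ^ w / L ^ 2 with ht
  set B : ℕ → ℕ := fun s => ⌊(k * s : ℝ) / Real.sqrt L⌋₊ + 1 with hB
  set u : ℝ := (k : ℝ) / L - ((k : ℝ) / Real.sqrt L) * Real.log L with hu
  set Ts : Finset (Finset (Fin d → ZMod 2)) :=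
    (Finset.Icc 1 t).biUnion
      (fun s => Finset.powersetCard s (Finset.univ : Finset (Fin d → ZMod 2))) with hTs
  set badT : Finset (Fin d → ZMod 2) → Finset (Fin k → Fin w → CoefSp d L) :=
    fun T => Finset.univ.filter (fun c =>
      (∑ i : Fin k, (T.image (fun p (tt : Fin w) => evalC (c i tt) p)).card) + B T.card
        ≤ k * T.card) with hbadT
  set badF : Finset (Fin k → Fin w → CoefSp d L) :=
    Finset.univ.filter (fun c =>
      ¬ IsExpander (Gof n L k w d c) (1 - 1 / Real.sqrt L) k t) with hbadF
  -- Step 0 : card as finset card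
  have hc0 : Nat.card {c : Fin k → Fin w → CoefSp d L //
      ¬ IsExpander (Gof n L k w d c) (1 - 1 / Real.sqrt L) k (2 ^ w / L ^ 2)}
      = badF.card := by
    rw [Nat.card_eq_fintype_card, Fintype.card_subtype, hbadF, ht]
  -- Step 1 : inclusion into the union
  have hsub : badF ⊆ Ts.biUnion badT := by
    intro c hc
    rw [hbadF, Finset.mem_filter, IsExpander] at hc
    push_neg at hc
    obtain ⟨T, hTne, hTcard, hlt⟩ := hc.2
    have hTmem : T ∈ Ts := by
      rw [hTs, Finset.mem_biUnion]
      exact ⟨T.card, Finset.mem_Icc.mpr ⟨Finset.card_pos.mpr hTne, hTcard⟩,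
        Finset.mem_powersetCard.mpr ⟨Finset.subset_univ T, rfl⟩⟩
    rw [Finset.mem_biUnion]
    refine ⟨T, hTmem, ?_⟩
    rw [hbadT, Finset.mem_filter]
    refine ⟨Finset.mem_univ _, ?_⟩
    set s := T.card with hs
    set Sim := ∑ i : Fin k, (T.image (fun p (tt : Fin w) => evalC (c i tt) p)).card with hSm
    have h1 : Sim ≤ orWeight (Gof n L k w d c) T := sum_image_le_orWeight hkn c T
    have h3 : Sim ≤ k * s := by
      rw [hSm]
      calc ∑ i : Fin k, (T.image (fun p (tt : Fin w) => evalC (c i tt) p)).card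
          ≤ ∑ _i : Fin k, s := Finset.sum_le_sum (fun i _ => Finset.card_image_le)
        _ = k * s := by rw [Finset.sum_const, smul_eq_mul, Finset.card_univ, Fintype.card_fin]
      
    have hreal : ((k : ℝ) * (s : ℝ)) / Real.sqrt L < ((k * s - Sim : ℕ) : ℝ) := by
      have h2 : (orWeight (Gof n L k w d c) T : ℝ) < (1 - 1 / Real.sqrt L) * k * s := hlt
      have h1r : (Sim : ℝ) ≤ (orWeight (Gof n L k w d c) T : ℝ) := by exact_mod_cast h1
      rw [Nat.cast_sub h3]
      push_cast
      have hexpand : (1 - 1 / Real.sqrt L) * k * s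
          = (k : ℝ) * s - (k * s : ℝ) / Real.sqrt L := by
        field_simp
      rw [hexpand] at h2
      push_cast at h1r ⊢
      linarith
    have hfloor : ⌊((k : ℝ) * (s : ℝ)) / Real.sqrt L⌋₊ < k * s - Sim := by
      rw [Nat.floor_lt (by positivity)]
      exact hreal
    have : B s ≤ k * s - Sim := by
      rw [hB]
      simp only []
      push_cast
      omega
    omega
  -- Step 2+3 : per-T bound
  have hstep3 : ∀ T ∈ Ts, ((badT T).card : ℝ)
      ≤ (Nat.card (Fin k → Fin w → CoefSp d L) : ℝ) * Real.exp (T.card * u) := by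
    intro T hT
    rw [hTs, Finset.mem_biUnion] at hT
    obtain ⟨s, hsmem, hTmem⟩ := hT
    rw [Finset.mem_powersetCard] at hTmem
    rw [Finset.mem_Icc] at hsmem
    have hs : T.card = s := hTmem.2
    have hs1 : 1 ≤ T.card := hs ▸ hsmem.1
    have hst : T.card ≤ t := hs ▸ hsmem.2
    have hT2L : T.card ≤ 2 ^ L :=
      le_trans hst (le_trans (Nat.div_le_self _ _) hwL)
    have hcard : ((badT T).card : ℕ)
        = Nat.card {c : Fin k → Fin w → CoefSp d L //
          (∑ i : Fin k, (T.image (fun p (tt : Fin w) => evalC (c i tt) p)).card) + B T.card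
            ≤ k * T.card} := by
      rw [Nat.card_eq_fintype_card, Fintype.card_subtype, hbadT]
    have hPT := perT_bound (L := L) (k := k) (w := w) hL1 T hT2L (B T.card)
    rw [← hcard] at hPT
    refine le_trans hPT ?_
    -- analytic estimate
    rw [div_le_iff₀ (by positivity), mul_assoc]
    apply mul_le_mul_of_nonneg_left _ (Nat.cast_nonneg _)
    -- (2^w + s L)^(k s) ≤ exp(s u) * ((2^w)^(k s) * L^B)
    set N : ℝ := (2:ℝ) ^ w with hN
    have hNpos : (0:ℝ) < N := by positivity
    have hsL2N : (T.card : ℝ) * L ^ 2 ≤ N := by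
      have : T.card * L ^ 2 ≤ 2 ^ w := (Nat.le_div_iff_mul_le (by positivity)).mp hst
      rw [hN]
      exact_mod_cast this
    have hfrac : (T.card : ℝ) * L / N ≤ 1 / L := by
      rw [div_le_div_iff₀ hNpos hL0]
      calc (T.card : ℝ) * L * L = T.card * L ^ 2 := by ring
        _ ≤ N := hsL2N
        _ = 1 * N := by ring
    have hbase : N + T.card * L ≤ N * Real.exp (1 / (L:ℝ)) := by
      have h1 : (1 : ℝ) + T.card * L / N ≤ 1 + 1 / L := by linarith
      have h2 : (1 : ℝ) + 1 / L ≤ Real.exp (1 / L) := by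
        have := Real.add_one_le_exp (1 / (L:ℝ))
        linarith
      calc N + T.card * L = N * (1 + T.card * L / N) := by field_simp
        _ ≤ N * Real.exp (1 / L) := by
            apply mul_le_mul_of_nonneg_left _ (le_of_lt hNpos)
            linarith
    have hpow : ((2:ℝ) ^ w + T.card * L) ^ (k * T.card)
        ≤ N ^ (k * T.card) * Real.exp ((k * T.card : ℕ) * (1 / (L:ℝ))) := by
      rw [Real.exp_nat_mul, ← mul_pow]
      apply pow_le_pow_left₀ (by positivity)
      rw [hN] at hbase ⊢
      exact hbase
    have hLB : Real.exp (((k * T.card : ℕ) : ℝ) / Real.sqrt L * Real.log L)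
        ≤ (L : ℝ) ^ (B T.card) := by
      have hBge : ((k * T.card : ℕ) : ℝ) / Real.sqrt L ≤ (B T.card : ℝ) := by
        rw [hB]
        push_cast
        exact le_of_lt (Nat.lt_floor_add_one _)
      calc Real.exp (((k * T.card : ℕ) : ℝ) / Real.sqrt L * Real.log L)
          ≤ Real.exp ((B T.card : ℝ) * Real.log L) := by
            apply Real.exp_le_exp.mpr
            exact mul_le_mul_of_nonneg_right hBge hlogL
        _ = (L : ℝ) ^ (B T.card) := by
            rw [Real.exp_nat_mul, Real.exp_log hL0]
    calc ((2:ℝ) ^ w + T.card * L) ^ (k * T.card)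
        ≤ N ^ (k * T.card) * Real.exp ((k * T.card : ℕ) * (1 / (L:ℝ))) := hpow
      _ ≤ Real.exp (T.card * u) * (N ^ (k * T.card) * (L:ℝ) ^ (B T.card)) := by
          rw [← mul_assoc, mul_comm (Real.exp (T.card * u)) (N ^ (k * T.card)), mul_assoc]
          apply mul_le_mul_of_nonneg_left _ (by positivity)
          have key : Real.exp ((k * T.card : ℕ) * (1 / (L:ℝ)))
              = Real.exp (T.card * u) * Real.exp (((k * T.card : ℕ) : ℝ) / Real.sqrt L * Real.log L) := by
            rw [← Real.exp_add, hu]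
            congr 1
            push_cast
            field_simp
            ring
          rw [key]
          apply mul_le_mul_of_nonneg_left hLB (le_of_lt (Real.exp_pos _))
      _ = Real.exp (T.card * u) * (((2:ℝ) ^ w) ^ (k * T.card) * (L:ℝ) ^ (B T.card)) := by
          rw [hN]
  -- Step 4 : sum everything
  have hdisj : (↑(Finset.Icc 1 t) : Set ℕ).PairwiseDisjoint
      (fun s => Finset.powersetCard s (Finset.univ : Finset (Fin d → ZMod 2))) := by
    intro s1 _ s2 _ hne
    rw [Function.onFun]
    apply Finset.disjoint_left.mpr
    intro T hT1 hT2
    exact hne ((Finset.mem_powersetCard.mp hT1).2.symm.trans (Finset.mem_powersetCard.mp hT2).2)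
  have hm2d : Fintype.card (Fin d → ZMod 2) = 2 ^ d := by
    rw [Fintype.card_fun, ZMod.card 2, Fintype.card_fin]
  have h2e : (2:ℝ) ≤ Real.exp 1 := by
    have := Real.exp_one_gt_d9
    linarith
  have hCΩ : (0:ℝ) ≤ (Nat.card (Fin k → Fin w → CoefSp d L) : ℝ) := Nat.cast_nonneg _
  rw [hc0]
  calc ((badF.card : ℕ) : ℝ)
      ≤ ((Ts.biUnion badT).card : ℝ) := by exact_mod_cast Finset.card_le_card hsub
    _ ≤ ∑ T ∈ Ts, ((badT T).card : ℝ) := by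
        have := Finset.card_biUnion_le (s := Ts) (t := badT)
        push_cast
        exact_mod_cast this
    _ ≤ ∑ T ∈ Ts, (Nat.card (Fin k → Fin w → CoefSp d L) : ℝ) * Real.exp (T.card * u) :=
        Finset.sum_le_sum hstep3
    _ = ∑ s ∈ Finset.Icc 1 t, ∑ T ∈ Finset.powersetCard s Finset.univ,
          (Nat.card (Fin k → Fin w → CoefSp d L) : ℝ) * Real.exp (T.card * u) := by
        rw [hTs]
        exact Finset.sum_biUnion hdisj
    _ = ∑ s ∈ Finset.Icc 1 t, ((2 ^ d).choose s : ℝ)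
          * ((Nat.card (Fin k → Fin w → CoefSp d L) : ℝ) * Real.exp (s * u)) := by
        apply Finset.sum_congr rfl
        intro s _
        rw [Finset.sum_congr rfl (fun T hT => by
          rw [(Finset.mem_powersetCard.mp hT).2])]
        rw [Finset.sum_const, Finset.card_powersetCard, Finset.card_univ, hm2d, nsmul_eq_mul]
    _ ≤ ∑ s ∈ Finset.Icc 1 t, ((2 ^ d : ℕ) ^ s : ℝ)
          * ((Nat.card (Fin k → Fin w → CoefSp d L) : ℝ) * Real.exp (s * u)) := by
        apply Finset.sum_le_sum
        intro s _
        apply mul_le_mul_of_nonneg_right _ (by positivity)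
        exact_mod_cast Nat.choose_le_pow (2 ^ d) s
    _ = ∑ s ∈ Finset.Icc 1 t, (Nat.card (Fin k → Fin w → CoefSp d L) : ℝ)
          * Real.exp (s * ((d : ℝ) * Real.log 2 + u)) := by
        apply Finset.sum_congr rfl
        intro s _
        have h1 : ((2 ^ d : ℕ) ^ s : ℝ) = Real.exp ((d * s : ℕ) * Real.log 2) := by
          rw [Real.exp_nat_mul, Real.exp_log (by norm_num : (0:ℝ) < 2)]
          push_cast
          rw [← pow_mul]
        rw [h1]
        rw [show Real.exp ((d * s : ℕ) * Real.log 2)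
            * ((Nat.card (Fin k → Fin w → CoefSp d L) : ℝ) * Real.exp (s * u))
          = (Nat.card (Fin k → Fin w → CoefSp d L) : ℝ)
            * (Real.exp ((d * s : ℕ) * Real.log 2) * Real.exp (s * u)) from by ring]
        rw [← Real.exp_add]
        congr 2
        push_cast
        ring
    _ ≤ ∑ s ∈ Finset.Icc 1 t, (Nat.card (Fin k → Fin w → CoefSp d L) : ℝ)
          * Real.exp (-(2 * (L:ℝ))) := by
        apply Finset.sum_le_sum
        intro s hs
        rw [Finset.mem_Icc] at hs
        apply mul_le_mul_of_nonneg_left _ hCΩ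
        apply Real.exp_le_exp.mpr
        have hs1 : (1:ℝ) ≤ (s:ℝ) := by exact_mod_cast hs.1
        have hsnn : (0:ℝ) ≤ (s:ℝ) := by linarith
        have hle : (d : ℝ) * Real.log 2 + u ≤ -(2 * (L:ℝ)) := by
          rw [hu]
          linarith [hΔ]
        calc (s:ℝ) * ((d : ℝ) * Real.log 2 + u) ≤ (s:ℝ) * (-(2 * (L:ℝ))) :=
              mul_le_mul_of_nonneg_left hle hsnn
          _ ≤ 1 * (-(2 * (L:ℝ))) :=
              mul_le_mul_of_nonpos_right hs1 (neg_nonpos.mpr (by positivity))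
          _ = -(2 * (L:ℝ)) := one_mul _
    _ = (t : ℝ) * ((Nat.card (Fin k → Fin w → CoefSp d L) : ℝ) * Real.exp (-(2 * (L:ℝ)))) := by
        rw [Finset.sum_const, Nat.card_Icc, nsmul_eq_mul]
        norm_num
    _ ≤ ((2:ℝ) ^ L) * ((Nat.card (Fin k → Fin w → CoefSp d L) : ℝ) * Real.exp (-(2 * (L:ℝ)))) := by
        apply mul_le_mul_of_nonneg_right _ (by positivity)
        have ht2L : t ≤ 2 ^ L := le_trans (Nat.div_le_self _ _) hwL
        calc (t:ℝ) ≤ ((2 ^ L : ℕ) : ℝ) := by exact_mod_cast ht2L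
          _ = (2:ℝ) ^ L := by push_cast; ring
    _ ≤ (Real.exp (L:ℝ)) * ((Nat.card (Fin k → Fin w → CoefSp d L) : ℝ) * Real.exp (-(2 * (L:ℝ)))) := by
        apply mul_le_mul_of_nonneg_right _ (by positivity)
        calc (2:ℝ) ^ L ≤ (Real.exp 1) ^ L := pow_le_pow_left₀ (by norm_num) h2e L
          _ = Real.exp (L:ℝ) := Real.exp_one_pow L
    _ = Real.exp (-(L : ℝ)) * (Nat.card (Fin k → Fin w → CoefSp d L) : ℝ) := by
        rw [mul_comm (Real.exp (L:ℝ)) _, mul_assoc, ← Real.exp_add]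
        ring_nf


lemma poly_le_two_pow (c : ℕ) : ∀ᶠ L : ℕ in Filter.atTop, L ^ c ≤ 2 ^ (L - 1) := by
  have hs : Summable (fun n : ℕ => (n : ℝ) ^ c * (1/2 : ℝ) ^ n) :=
    summable_pow_mul_geometric_of_norm_lt_one c
      (by rw [Real.norm_eq_abs, abs_of_pos (by norm_num : (0:ℝ) < 1/2)]; norm_num)
  have ht := hs.tendsto_atTop_zero
  have hev : ∀ᶠ L : ℕ in Filter.atTop, (L:ℝ) ^ c * (1/2 : ℝ) ^ L < 1/2 :=
    ht.eventually_lt_const (by norm_num)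
  filter_upwards [hev, Filter.eventually_ge_atTop 1] with L hL hL1
  have h2 : (L:ℝ) ^ c < ((2 ^ (L - 1) : ℕ) : ℝ) := by
    have hpow : ((1:ℝ)/2) ^ L = 1 / 2 ^ L := by rw [div_pow, one_pow]
    rw [hpow] at hL
    have h2L : (0:ℝ) < 2 ^ L := by positivity
    have hmul : (L:ℝ) ^ c < 2 ^ L / 2 := by
      rw [mul_one_div] at hL
      have h3 := (div_lt_iff₀ h2L).mp hL
      linarith
    have hsplit : (2:ℝ) ^ L = 2 ^ (L - 1) * 2 := by
      rw [← pow_succ]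
      congr 1
      omega
    push_cast
    rw [hsplit] at hmul
    nlinarith
  have : (L : ℕ) ^ c < 2 ^ (L - 1) := by exact_mod_cast (by push_cast at h2 ⊢; exact h2 : ((L ^ c : ℕ) : ℝ) < ((2 ^ (L-1) : ℕ) : ℝ))
  omega

lemma delta_ineq (cm ck L : ℕ) (hcm : 2 ≤ cm) (hck : cm + 1 ≤ ck) (hL : 16 ≤ L) :
    ((L ^ cm : ℕ) : ℝ) * Real.log 2 + ((L ^ ck : ℕ) : ℝ) / L + 2 * L
      ≤ (((L ^ ck : ℕ) : ℝ) / Real.sqrt L) * Real.log L := by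
  have hx16 : (16:ℝ) ≤ (L:ℝ) := by exact_mod_cast hL
  have hx1 : (1:ℝ) ≤ (L:ℝ) := by linarith
  have hx0 : (0:ℝ) < (L:ℝ) := by linarith
  have hlog2 : Real.log 2 ≤ 1 := by
    have := Real.log_two_lt_d9
    linarith
  have hlogL : (1:ℝ) ≤ Real.log L := by
    rw [Real.le_log_iff_exp_le hx0]
    have := Real.exp_one_lt_d9
    linarith
  have hsqrt4 : (4:ℝ) ≤ Real.sqrt L := by
    rw [show (4:ℝ) = Real.sqrt 16 from by
      rw [show (16:ℝ) = 4 ^ 2 by norm_num, Real.sqrt_sq (by norm_num)]]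
    exact Real.sqrt_le_sqrt hx16
  have hck1 : ck - 1 ≥ 2 := by omega
  have hxpow : ∀ a b : ℕ, a ≤ b → (L:ℝ) ^ a ≤ (L:ℝ) ^ b := fun a b hab =>
    pow_le_pow_right₀ hx1 hab
  have hkdiv : ((L ^ ck : ℕ) : ℝ) / L = (L:ℝ) ^ (ck - 1) := by
    push_cast
    conv_lhs => rw [show ck = (ck - 1) + 1 by omega, pow_succ]
    field_simp
  have hterm1 : ((L ^ cm : ℕ) : ℝ) * Real.log 2 ≤ (L:ℝ) ^ (ck - 1) := by
    push_cast
    calc (L:ℝ) ^ cm * Real.log 2 ≤ (L:ℝ) ^ cm * 1 := by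
          apply mul_le_mul_of_nonneg_left hlog2 (by positivity)
      _ = (L:ℝ) ^ cm := mul_one _
      _ ≤ (L:ℝ) ^ (ck - 1) := hxpow _ _ (by omega)
  have hterm3 : 2 * (L:ℝ) ≤ 2 * (L:ℝ) ^ (ck - 1) := by
    have : (L:ℝ) = (L:ℝ) ^ 1 := (pow_one _).symm
    nlinarith [hxpow 1 (ck - 1) (by omega)]
  have hrhs : 4 * (L:ℝ) ^ (ck - 1) ≤ (((L ^ ck : ℕ) : ℝ) / Real.sqrt L) * Real.log L := by
    have hkey : ((L ^ ck : ℕ) : ℝ) / Real.sqrt L = (L:ℝ) ^ (ck - 1) * Real.sqrt L := by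
      push_cast
      conv_lhs => rw [show ck = (ck - 1) + 1 by omega, pow_succ]
      rw [mul_div_assoc, Real.div_sqrt]
    rw [hkey]
    calc 4 * (L:ℝ) ^ (ck - 1) ≤ Real.sqrt L * (L:ℝ) ^ (ck - 1) := by
          apply mul_le_mul_of_nonneg_right hsqrt4 (by positivity)
      _ = (L:ℝ) ^ (ck - 1) * Real.sqrt L * 1 := by ring
      _ ≤ (L:ℝ) ^ (ck - 1) * Real.sqrt L * Real.log L := by
          apply mul_le_mul_of_nonneg_left hlogL (by positivity)
  calc ((L ^ cm : ℕ) : ℝ) * Real.log 2 + ((L ^ ck : ℕ) : ℝ) / L + 2 * L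
      ≤ (L:ℝ) ^ (ck - 1) + (L:ℝ) ^ (ck - 1) + 2 * (L:ℝ) ^ (ck - 1) := by
        rw [hkdiv]
        have := hterm1
        have := hterm3
        linarith
    _ = 4 * (L:ℝ) ^ (ck - 1) := by ring
    _ ≤ _ := hrhs

/-- Fix constants `c_m ≥ 2` and `c_k ≥ c_m + 1`, and for each `n`
set `L = ⌈log₂ n⌉`, `k = L^{c_k}`, `m = 2^{L^{c_m}}`, `w = ⌊log₂(n/k)⌋`.  If the
`k·w` polynomials `g^{(i,j)} : F_2^{log₂ m} → F_2` are drawn independently and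
uniformly at random from the polynomials of total degree at most `L`, then the
probability that the resulting matrix `G` is a
`(1 − 1/√L, ⌊2^w / L²⌋)`-expander tends to `1` as `n → ∞`. -/
theorem stmt1 (cm ck : ℕ) (hcm : 2 ≤ cm) (hck : cm + 1 ≤ ck) :
    Filter.Tendsto (fun n : ℕ =>
      (Nat.card {c : Fin ((Nat.clog 2 n) ^ ck) →
            Fin (Nat.log 2 (n / (Nat.clog 2 n) ^ ck)) →
            CoefSp ((Nat.clog 2 n) ^ cm) (Nat.clog 2 n) //
          IsExpander
            (Gof n (Nat.clog 2 n) ((Nat.clog 2 n) ^ ck)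
              (Nat.log 2 (n / (Nat.clog 2 n) ^ ck)) ((Nat.clog 2 n) ^ cm) c)
            (1 - 1 / Real.sqrt (Nat.clog 2 n)) ((Nat.clog 2 n) ^ ck)
            (2 ^ (Nat.log 2 (n / (Nat.clog 2 n) ^ ck)) / (Nat.clog 2 n) ^ 2)} : ℝ) /
        (Nat.card (Fin ((Nat.clog 2 n) ^ ck) →
            Fin (Nat.log 2 (n / (Nat.clog 2 n) ^ ck)) →
            CoefSp ((Nat.clog 2 n) ^ cm) (Nat.clog 2 n)) : ℝ))
      Filter.atTop (nhds 1) := by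
  classical
  have hLtend : Filter.Tendsto (fun n : ℕ => Nat.clog 2 n) Filter.atTop Filter.atTop := by
    apply Filter.tendsto_atTop_atTop.mpr
    intro M
    refine ⟨2 ^ M, fun n hn => ?_⟩
    calc M = Nat.clog 2 (2 ^ M) := (Nat.clog_pow 2 M one_lt_two).symm
      _ ≤ Nat.clog 2 n := Nat.clog_mono_right 2 hn
  have hmain : ∀ n : ℕ, 16 ≤ Nat.clog 2 n →
      (Nat.clog 2 n) ^ ck ≤ 2 ^ (Nat.clog 2 n - 1) → 2 ≤ n →
      1 - Real.exp (-(Nat.clog 2 n : ℝ)) ≤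
        (Nat.card {c : Fin ((Nat.clog 2 n) ^ ck) →
            Fin (Nat.log 2 (n / (Nat.clog 2 n) ^ ck)) →
            CoefSp ((Nat.clog 2 n) ^ cm) (Nat.clog 2 n) //
          IsExpander
            (Gof n (Nat.clog 2 n) ((Nat.clog 2 n) ^ ck)
              (Nat.log 2 (n / (Nat.clog 2 n) ^ ck)) ((Nat.clog 2 n) ^ cm) c)
            (1 - 1 / Real.sqrt (Nat.clog 2 n)) ((Nat.clog 2 n) ^ ck)
            (2 ^ (Nat.log 2 (n / (Nat.clog 2 n) ^ ck)) / (Nat.clog 2 n) ^ 2)} : ℝ) /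
        (Nat.card (Fin ((Nat.clog 2 n) ^ ck) →
            Fin (Nat.log 2 (n / (Nat.clog 2 n) ^ ck)) →
            CoefSp ((Nat.clog 2 n) ^ cm) (Nat.clog 2 n)) : ℝ) ∧
        (Nat.card {c : Fin ((Nat.clog 2 n) ^ ck) →
            Fin (Nat.log 2 (n / (Nat.clog 2 n) ^ ck)) →
            CoefSp ((Nat.clog 2 n) ^ cm) (Nat.clog 2 n) //
          IsExpander
            (Gof n (Nat.clog 2 n) ((Nat.clog 2 n) ^ ck)
              (Nat.log 2 (n / (Nat.clog 2 n) ^ ck)) ((Nat.clog 2 n) ^ cm) c)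
            (1 - 1 / Real.sqrt (Nat.clog 2 n)) ((Nat.clog 2 n) ^ ck)
            (2 ^ (Nat.log 2 (n / (Nat.clog 2 n) ^ ck)) / (Nat.clog 2 n) ^ 2)} : ℝ) /
        (Nat.card (Fin ((Nat.clog 2 n) ^ ck) →
            Fin (Nat.log 2 (n / (Nat.clog 2 n) ^ ck)) →
            CoefSp ((Nat.clog 2 n) ^ cm) (Nat.clog 2 n)) : ℝ) ≤ 1 := by
    intro n h16 hpoly hn2
    set Ln := Nat.clog 2 n with hLn
    set k := Ln ^ ck with hk
    set d := Ln ^ cm with hd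
    set w := Nat.log 2 (n / k) with hw
    have hk1 : 1 ≤ k := Nat.one_le_pow _ _ (by omega)
    have hkltn : k < n := by
      calc k ≤ 2 ^ (Ln - 1) := hpoly
        _ < n := Nat.pow_pred_clog_lt_self one_lt_two (by omega)
    have hnk0 : 0 < n / k := Nat.div_pos (le_of_lt hkltn) (by omega)
    have hkn : k * 2 ^ w ≤ n := by
      calc k * 2 ^ w ≤ k * (n / k) :=
            Nat.mul_le_mul_left k (Nat.pow_log_le_self 2 (by omega))
        _ = (n / k) * k := Nat.mul_comm _ _
        _ ≤ n := Nat.div_mul_le_self n k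
    have hwL : 2 ^ w ≤ 2 ^ Ln := by
      calc 2 ^ w ≤ n / k := Nat.pow_log_le_self 2 (by omega)
        _ ≤ n := Nat.div_le_self n k
        _ ≤ 2 ^ Ln := Nat.le_pow_clog one_lt_two n
    have hΔ := delta_ineq cm ck Ln hcm hck h16
    have hmb := master_bound n Ln k w d h16 hk1 hkn hwL hΔ
    -- cardinalities
    have hTot0 : 0 < Nat.card (Fin k → Fin w → CoefSp d Ln) := Nat.card_pos
    have hsplit : Nat.card {c : Fin k → Fin w → CoefSp d Ln //
          IsExpander (Gof n Ln k w d c) (1 - 1 / Real.sqrt Ln) k (2 ^ w / Ln ^ 2)}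
        + Nat.card {c : Fin k → Fin w → CoefSp d Ln //
          ¬ IsExpander (Gof n Ln k w d c) (1 - 1 / Real.sqrt Ln) k (2 ^ w / Ln ^ 2)}
        = Nat.card (Fin k → Fin w → CoefSp d Ln) := by
      rw [Nat.card_eq_fintype_card, Nat.card_eq_fintype_card, Nat.card_eq_fintype_card,
        Fintype.card_subtype, Fintype.card_subtype,
        Finset.card_filter_add_card_filter_not, Finset.card_univ]
    have hBadTot : Nat.card {c : Fin k → Fin w → CoefSp d Ln //
          ¬ IsExpander (Gof n Ln k w d c) (1 - 1 / Real.sqrt Ln) k (2 ^ w / Ln ^ 2)}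
        ≤ Nat.card (Fin k → Fin w → CoefSp d Ln) := by omega
    have hTotR : (0:ℝ) < (Nat.card (Fin k → Fin w → CoefSp d Ln) : ℝ) := by
      exact_mod_cast hTot0
    constructor
    · rw [le_div_iff₀ hTotR]
      have hGood : (Nat.card {c : Fin k → Fin w → CoefSp d Ln //
          IsExpander (Gof n Ln k w d c) (1 - 1 / Real.sqrt Ln) k (2 ^ w / Ln ^ 2)} : ℝ)
          = (Nat.card (Fin k → Fin w → CoefSp d Ln) : ℝ)
            - (Nat.card {c : Fin k → Fin w → CoefSp d Ln //
          ¬ IsExpander (Gof n Ln k w d c) (1 - 1 / Real.sqrt Ln) k (2 ^ w / Ln ^ 2)} : ℝ) := by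
        have := congrArg (fun x : ℕ => (x:ℝ)) hsplit
        push_cast at this
        linarith
      rw [hGood]
      nlinarith [hmb, hTotR]
    · rw [div_le_one hTotR]
      have : Nat.card {c : Fin k → Fin w → CoefSp d Ln //
          IsExpander (Gof n Ln k w d c) (1 - 1 / Real.sqrt Ln) k (2 ^ w / Ln ^ 2)}
          ≤ Nat.card (Fin k → Fin w → CoefSp d Ln) := by omega
      exact_mod_cast this
  -- eventual regime
  have hreg : ∀ᶠ n : ℕ in Filter.atTop,
      16 ≤ Nat.clog 2 n ∧ (Nat.clog 2 n) ^ ck ≤ 2 ^ (Nat.clog 2 n - 1) ∧ 2 ≤ n := by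
    have hE1 := hLtend.eventually (poly_le_two_pow ck)
    have hE2 := hLtend.eventually (Filter.eventually_ge_atTop 16)
    have hE3 := Filter.eventually_ge_atTop (2:ℕ)
    filter_upwards [hE1, hE2, hE3] with n h1 h2 h3
    exact ⟨h2, h1, h3⟩
  -- squeeze
  apply tendsto_of_tendsto_of_tendsto_of_le_of_le'
    (g := fun n : ℕ => 1 - Real.exp (-(Nat.clog 2 n : ℝ))) (h := fun _ : ℕ => (1:ℝ))
  · have hcast : Filter.Tendsto (fun n : ℕ => ((Nat.clog 2 n : ℕ) : ℝ))
        Filter.atTop Filter.atTop :=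
      Filter.Tendsto.comp tendsto_natCast_atTop_atTop hLtend
    have hexp : Filter.Tendsto (fun n : ℕ => Real.exp (-(Nat.clog 2 n : ℝ)))
        Filter.atTop (nhds 0) :=
      Real.tendsto_exp_neg_atTop_nhds_zero.comp hcast
    have hone : Filter.Tendsto (fun _ : ℕ => (1:ℝ)) Filter.atTop (nhds 1) :=
      tendsto_const_nhds
    have := hone.sub hexp
    simpa using this
  · exact tendsto_const_nhds
  · filter_upwards [hreg] with n hn
    exact (hmain n hn.1 hn.2.1 hn.2.2).1
  · filter_upwards [hreg] with n hn
    exact (hmain n hn.1 hn.2.1 hn.2.2).2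
end

section
/- There is an absolute constant N such that the following holds for every n ≥ N, all positive integers k and w, and every integer t with 1 ≤ t ≤ 2^w/(⌈log₂ n⌉)^2. Let R^{(1)}, …, R^{(k)} ∈ F_2^{t × 2^w} be independent uniformly random matrices, each conditioned on having exactly one nonzero entry per row, and let R = [R^{(1)} ‖ … ‖ R^{(k)}] be their horizontal concatenation. Then with probability at least 1 − 2^{−k t/√⌈log₂ n⌉}, the coordinatewise logical OR of all t rows of R has Hamming weight strictly greater than (1 − 1/√⌈log₂ n⌉)·k·t. -/
set_option maxHeartbeats 2000000

open Finset


lemma hits_card {k w t : ℕ} (r : Fin k → Fin t → Fin (2^w)) :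
    (univ.filter fun p : Fin k × Fin t => ¬ ∃ b < p.2, r p.1 b = r p.1 p.2).card
    = (univ.filter fun ic : Fin k × Fin (2^w) => ∃ a, r ic.1 a = ic.2).card := by
  refine Finset.card_bij (fun p _ => (p.1, r p.1 p.2)) ?_ ?_ ?_
  · intro p hp
    simp only [mem_filter, mem_univ, true_and]
    exact ⟨p.2, rfl⟩
  · rintro ⟨i, a⟩ hp ⟨i', a'⟩ hp' h
    simp only [mem_filter, mem_univ, true_and] at hp hp'
    simp only [Prod.mk.injEq] at h ⊢
    obtain ⟨h1, h2⟩ := h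
    subst h1
    refine ⟨rfl, ?_⟩
    rcases lt_trichotomy a a' with hlt | heq | hgt
    · exact absurd ⟨a, hlt, h2⟩ hp'
    · exact heq
    · exact absurd ⟨a', hgt, h2.symm⟩ hp
  · rintro ⟨i, c⟩ hic
    simp only [mem_filter, mem_univ, true_and] at hic
    obtain ⟨a, ha⟩ := hic
    have hne : (univ.filter fun b : Fin t => r i b = c).Nonempty := ⟨a, by simp [ha]⟩
    set a0 := (univ.filter fun b : Fin t => r i b = c).min' hne with ha0
    have ha0mem := Finset.min'_mem _ hne
    simp only [mem_filter, mem_univ, true_and] at ha0mem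
    refine ⟨(i, a0), ?_, ?_⟩
    · simp only [mem_filter, mem_univ, true_and]
      rintro ⟨b, hb, hbe⟩
      have : a0 ≤ b := Finset.min'_le _ _ (by simp [hbe.trans ha0mem])
      exact absurd hb (not_lt.mpr this)
    · simp [ha0, ha0mem]


lemma AS_card {k w t : ℕ} (ht : 0 < t) (S : Finset (Fin k × Fin t)) :
    (univ.filter fun r : Fin k → Fin t → Fin (2^w) =>
        ∀ p ∈ S, ∃ b < p.2, r p.1 b = r p.1 p.2).card
      ≤ t ^ S.card * (2^w) ^ (k*t - S.card) := by
  classical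
  set F : (Fin k → Fin t → Fin (2^w)) →
      ({p // p ∈ S} → Fin t) × ({p : Fin k × Fin t // p ∉ S} → Fin (2^w)) :=
    fun r => (fun p => if h : ∃ b, b < p.1.2 ∧ r p.1.1 b = r p.1.1 p.1.2
                then h.choose else ⟨0, ht⟩,
              fun p => r p.1.1 p.1.2) with hFdef
  have hinj : Set.InjOn F ((univ.filter fun r : Fin k → Fin t → Fin (2^w) =>
        ∀ p ∈ S, ∃ b < p.2, r p.1 b = r p.1 p.2) : Finset _) := by
    intro r hr r' hr' hF
    simp only [coe_filter, Set.mem_setOf_eq, mem_univ, true_and] at hr hr'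
    have key : ∀ m : ℕ, ∀ (i : Fin k) (a : Fin t), a.val < m → r i a = r' i a := by
      intro m
      induction m with
      | zero => intro i a ha; exact absurd ha (Nat.not_lt_zero _)
      | succ m ih =>
        intro i a ham
        by_cases hS : (i, a) ∈ S
        · have he : ∃ b, b < (i, a).2 ∧ r (i, a).1 b = r (i, a).1 (i, a).2 := hr (i, a) hS
          have he' : ∃ b, b < (i, a).2 ∧ r' (i, a).1 b = r' (i, a).1 (i, a).2 := hr' (i, a) hS
          have hfst := congrFun (congrArg Prod.fst hF) ⟨(i, a), hS⟩
          simp only [hFdef, dif_pos he, dif_pos he'] at hfst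
          have hb := he.choose_spec
          have hb' := he'.choose_spec
          have hblt : (he.choose : Fin t).val < m := by
            have := hb.1
            simp only at this
            omega
          calc r i a = r i he.choose := hb.2.symm
            _ = r' i he.choose := ih i he.choose hblt
            _ = r' i he'.choose := by rw [hfst]
            _ = r' i a := hb'.2
        · exact congrFun (congrArg Prod.snd hF) ⟨(i, a), hS⟩
    funext i a
    exact key (a.val + 1) i a (Nat.lt_succ_self _)
  have hle := Finset.card_le_card_of_injOn F (fun r _ => Finset.mem_univ (F r)) hinj
  calc _ ≤ (univ : Finset (({p // p ∈ S} → Fin t) ×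
        ({p : Fin k × Fin t // p ∉ S} → Fin (2^w)))).card := hle
    _ = t ^ S.card * (2^w) ^ (k*t - S.card) := by
        simp only [card_univ, Fintype.card_prod, Fintype.card_fun, Fintype.card_coe,
          Fintype.card_fin]
        congr 1
        have : Fintype.card {p : Fin k × Fin t // p ∉ S} =
            Fintype.card (Fin k × Fin t) - S.card := by
          rw [Fintype.card_subtype_compl]
          simp [Fintype.card_coe]
        rw [this]
        simp [Fintype.card_prod]

lemma bad_card {k w t : ℕ} (ht : 0 < t) (d : ℕ) :
    (univ.filter fun r : Fin k → Fin t → Fin (2^w) =>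
        d ≤ (univ.filter fun p : Fin k × Fin t => ∃ b < p.2, r p.1 b = r p.1 p.2).card).card
      ≤ (k*t).choose d * (t ^ d * (2^w) ^ (k*t - d)) := by
  classical
  have hsub : (univ.filter fun r : Fin k → Fin t → Fin (2^w) =>
        d ≤ (univ.filter fun p : Fin k × Fin t => ∃ b < p.2, r p.1 b = r p.1 p.2).card)
      ⊆ (Finset.powersetCard d (univ : Finset (Fin k × Fin t))).biUnion
        (fun S => univ.filter fun r : Fin k → Fin t → Fin (2^w) =>
          ∀ p ∈ S, ∃ b < p.2, r p.1 b = r p.1 p.2) := by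
    intro r hr
    simp only [mem_filter, mem_univ, true_and] at hr
    obtain ⟨S, hSsub, hScard⟩ := Finset.exists_subset_card_eq hr
    refine Finset.mem_biUnion.mpr ⟨S, Finset.mem_powersetCard.mpr ⟨Finset.subset_univ S, hScard⟩, ?_⟩
    simp only [mem_filter, mem_univ, true_and]
    intro p hp
    have := hSsub hp
    simp only [mem_filter, mem_univ, true_and] at this
    exact this
  calc _ ≤ ((Finset.powersetCard d (univ : Finset (Fin k × Fin t))).biUnion
        (fun S => univ.filter fun r : Fin k → Fin t → Fin (2^w) =>
          ∀ p ∈ S, ∃ b < p.2, r p.1 b = r p.1 p.2)).card := Finset.card_le_card hsub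
    _ ≤ ∑ S ∈ Finset.powersetCard d (univ : Finset (Fin k × Fin t)),
        (univ.filter fun r : Fin k → Fin t → Fin (2^w) =>
          ∀ p ∈ S, ∃ b < p.2, r p.1 b = r p.1 p.2).card := Finset.card_biUnion_le
    _ ≤ ∑ S ∈ Finset.powersetCard d (univ : Finset (Fin k × Fin t)),
        (t ^ d * (2^w) ^ (k*t - d)) := by
        refine Finset.sum_le_sum fun S hS => ?_
        have hcard := (Finset.mem_powersetCard.mp hS).2
        simpa [hcard] using AS_card ht S
    _ = (k*t).choose d * (t ^ d * (2^w) ^ (k*t - d)) := by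
        rw [Finset.sum_const, Finset.card_powersetCard, smul_eq_mul]
        simp [Fintype.card_prod]


lemma succ_pow_le (d : ℕ) : ((d:ℝ) + 1)^d ≤ 3 * (d:ℝ)^d := by
  rcases Nat.eq_zero_or_pos d with h | h
  · simp [h]
  have hd : (0:ℝ) < d := by exact_mod_cast h
  have h1 : ((d:ℝ) + 1) = d * (1 + 1/d) := by field_simp
  rw [h1, mul_pow]
  have h2 : (1 + 1/(d:ℝ))^d ≤ 3 := by
    have he : (1 + 1/(d:ℝ)) ≤ Real.exp (1/d) := by
      have := Real.add_one_le_exp (1/(d:ℝ))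
      linarith
    calc (1 + 1/(d:ℝ))^d ≤ (Real.exp (1/d))^d := by
          apply pow_le_pow_left₀ (by positivity) he
      _ = Real.exp 1 := by
          rw [← Real.exp_nat_mul]
          congr 1
          field_simp
      _ ≤ 3 := by linarith [Real.exp_one_lt_d9]
  calc (d:ℝ)^d * (1 + 1/(d:ℝ))^d ≤ (d:ℝ)^d * 3 := by
        apply mul_le_mul_of_nonneg_left h2 (by positivity)
    _ = 3 * (d:ℝ)^d := by ring

lemma pow_self_le_three_pow_mul_factorial (d : ℕ) : (d:ℝ)^d ≤ 3^d * (d.factorial : ℝ) := by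
  induction d with
  | zero => simp
  | succ d ih =>
    have h1 : ((d:ℝ) + 1)^d ≤ 3 * (d:ℝ)^d := succ_pow_le d
    have hd1 : (0:ℝ) ≤ (d:ℝ) + 1 := by positivity
    calc ((d+1:ℕ):ℝ)^(d+1) = ((d:ℝ)+1) * ((d:ℝ)+1)^d := by push_cast; ring
      _ ≤ ((d:ℝ)+1) * (3 * (d:ℝ)^d) := by apply mul_le_mul_of_nonneg_left h1 hd1
      _ ≤ ((d:ℝ)+1) * (3 * (3^d * (d.factorial : ℝ))) := by
          apply mul_le_mul_of_nonneg_left _ hd1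
          apply mul_le_mul_of_nonneg_left ih (by norm_num)
      _ = 3^(d+1) * (((d+1) * d.factorial : ℕ) : ℝ) := by push_cast; ring
      _ = 3^(d+1) * ((d+1).factorial : ℝ) := by rw [Nat.factorial_succ]

/-- There is an absolute constant `N` such that for every `n ≥ N`,
all positive `k, w` and every `t` with `1 ≤ t ≤ 2^w / (⌈log₂ n⌉)²`:
if `R^{(1)}, …, R^{(k)} ∈ F_2^{t × 2^w}` are independent uniform matrices each with
exactly one nonzero entry per row (encoded by the position `r i a ∈ Fin (2^w)` of
the nonzero entry of row `a` of `R^{(i)}`), then with probability at least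
`1 − 2^{−kt/√⌈log₂ n⌉}` the coordinatewise OR of all `t` rows of the concatenation
`R = [R^{(1)} ‖ … ‖ R^{(k)}]` (whose columns are indexed by `Fin k × Fin (2^w)`)
has Hamming weight strictly greater than `(1 − 1/√⌈log₂ n⌉)·k·t`. -/
theorem stmt2 : ∃ N : ℕ, ∀ n : ℕ, N ≤ n → ∀ k w t : ℕ, 0 < k → 0 < w → 0 < t →
    (t : ℝ) ≤ (2 : ℝ) ^ w / (Nat.clog 2 n : ℝ) ^ 2 →
    1 - (2 : ℝ) ^ (-((k * t : ℕ) : ℝ) / Real.sqrt (Nat.clog 2 n)) ≤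
      (Nat.card {r : Fin k → Fin t → Fin (2 ^ w) //
          ((1 - 1 / Real.sqrt (Nat.clog 2 n)) * k * t : ℝ) <
            (Nat.card {ic : Fin k × Fin (2 ^ w) // ∃ a : Fin t, r ic.1 a = ic.2} : ℝ)} : ℝ) /
        (Nat.card (Fin k → Fin t → Fin (2 ^ w)) : ℝ) := by
  classical
  refine ⟨16, ?_⟩
  intro n hn k w t hk hw ht hineq
  set L := Nat.clog 2 n with hL
  have hL4 : 4 ≤ L := by
    have h16 : Nat.clog 2 16 = 4 := by
      rw [show (16:ℕ) = 2^4 by norm_num, Nat.clog_pow 2 4 one_lt_two]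
    calc 4 = Nat.clog 2 16 := h16.symm
      _ ≤ Nat.clog 2 n := Nat.clog_mono_right 2 hn
  have hLr : (4:ℝ) ≤ (L:ℝ) := by exact_mod_cast hL4
  set s := Real.sqrt (L:ℝ) with hs
  have hss : s * s = (L:ℝ) := Real.mul_self_sqrt (by positivity)
  have hs2 : 2 ≤ s := by
    rw [hs, show (2:ℝ) = Real.sqrt 4 by
      rw [show (4:ℝ) = 2^2 by norm_num, Real.sqrt_sq (by norm_num)]]
    exact Real.sqrt_le_sqrt hLr
  have hs0 : (0:ℝ) < s := by linarith
  have hkt1 : 1 ≤ k * t := Nat.one_le_iff_ne_zero.mpr (Nat.mul_pos hk ht).ne'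
  have hktR : (1:ℝ) ≤ ((k*t : ℕ) : ℝ) := by exact_mod_cast hkt1
  set d := ⌈((k*t : ℕ) : ℝ) / s⌉₊ with hd
  have hd1 : 1 ≤ d := Nat.ceil_pos.mpr (by positivity)
  have hdR : (1:ℝ) ≤ (d:ℝ) := by exact_mod_cast hd1
  have hdkt : d ≤ k * t := by
    rw [hd]
    apply Nat.ceil_le.mpr
    calc ((k*t:ℕ):ℝ)/s ≤ ((k*t:ℕ):ℝ) := div_le_self (by positivity) (by linarith)
      _ = ((k*t:ℕ):ℝ) := rfl
  have hktd : ((k*t:ℕ):ℝ) ≤ d * s := by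
    have h1 := Nat.le_ceil (((k*t:ℕ):ℝ)/s)
    rw [← hd] at h1
    calc ((k*t:ℕ):ℝ) = ((k*t:ℕ):ℝ)/s * s := by field_simp
      _ ≤ (d:ℝ) * s := mul_le_mul_of_nonneg_right h1 hs0.le
  set P := (2:ℝ)^w with hP
  have hP0 : (0:ℝ) < P := by positivity
  set q := (2:ℝ) ^ (-((k * t : ℕ) : ℝ) / s) with hq
  have hq0 : (0:ℝ) < q := Real.rpow_pos_of_pos (by norm_num) _
  -- main analytic inequality
  have hfpos : (0:ℝ) < (d.factorial : ℝ) := by exact_mod_cast d.factorial_pos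
  have hchoose : (((k*t).choose d : ℕ) : ℝ) ≤ (3*s)^d := by
    calc (((k*t).choose d : ℕ) : ℝ) ≤ ((k*t:ℕ):ℝ)^d / (d.factorial : ℝ) :=
          Nat.choose_le_pow_div d (k*t)
      _ ≤ (3*s)^d := by
          rw [div_le_iff₀ hfpos]
          calc ((k*t:ℕ):ℝ)^d ≤ ((d:ℝ)*s)^d := pow_le_pow_left₀ (by positivity) hktd d
            _ = s^d * (d:ℝ)^d := by rw [mul_pow]; ring
            _ ≤ s^d * (3^d * (d.factorial : ℝ)) :=
                mul_le_mul_of_nonneg_left (pow_self_le_three_pow_mul_factorial d) (by positivity)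
            _ = (3*s)^d * (d.factorial : ℝ) := by rw [mul_pow]; ring
  have hhalf : 3*s/((L:ℝ)^2) ≤ 1/2 := by
    rw [div_le_div_iff₀ (by positivity) (by norm_num)]
    nlinarith [hss, hs2]
  have hkey : (((k*t).choose d : ℕ) : ℝ) * (t:ℝ)^d * P^(k*t - d) ≤ q * P^(k*t) := by
    have htq : (t:ℝ) ≤ P/(L:ℝ)^2 := hineq
    have hPdk : P^d * P^(k*t-d) = P^(k*t) := by
      rw [← pow_add]
      congr 1
      omega
    have step1 : (((k*t).choose d : ℕ) : ℝ) * (t:ℝ)^d * P^(k*t - d)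
        ≤ (3*s)^d * (P/(L:ℝ)^2)^d * P^(k*t-d) := by
      apply mul_le_mul_of_nonneg_right _ (by positivity)
      apply mul_le_mul hchoose (pow_le_pow_left₀ (by positivity) htq d) (by positivity) (by positivity)
    have step2 : (3*s)^d * (P/(L:ℝ)^2)^d * P^(k*t-d) = (3*s/((L:ℝ)^2))^d * P^(k*t) := by
      rw [← hPdk]
      rw [div_pow, div_pow, mul_pow]
      field_simp
    have step3 : (3*s/((L:ℝ)^2))^d ≤ (1/2:ℝ)^d :=
      pow_le_pow_left₀ (by positivity) hhalf d
    have step4 : ((1:ℝ)/2)^d ≤ q := by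
      have h1 : ((1:ℝ)/2)^d = (2:ℝ)^(-(d:ℝ)) := by
        rw [Real.rpow_neg (by norm_num), Real.rpow_natCast, one_div, inv_pow]
      rw [h1, hq]
      apply Real.rpow_le_rpow_left_iff (by norm_num : (1:ℝ) < 2) |>.mpr
      rw [neg_div, neg_le_neg_iff]
      exact Nat.le_ceil _
    calc (((k*t).choose d : ℕ) : ℝ) * (t:ℝ)^d * P^(k*t - d)
        ≤ (3*s/((L:ℝ)^2))^d * P^(k*t) := by rw [← step2]; exact step1
      _ ≤ (1/2:ℝ)^d * P^(k*t) := mul_le_mul_of_nonneg_right step3 (by positivity)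
      _ ≤ q * P^(k*t) := mul_le_mul_of_nonneg_right step4 (by positivity)
  -- counting glue
  set G : (Fin k → Fin t → Fin (2^w)) → Prop := fun r =>
    ((1 - 1/s) * k * t : ℝ) <
      (Nat.card {ic : Fin k × Fin (2^w) // ∃ a : Fin t, r ic.1 a = ic.2} : ℝ) with hG
  have hgood : Nat.card {r : Fin k → Fin t → Fin (2^w) // G r} = (univ.filter G).card := by
    rw [Nat.card_eq_fintype_card, Fintype.card_subtype]
  have hbadsub : (univ.filter fun r : Fin k → Fin t → Fin (2^w) => ¬ G r) ⊆
      (univ.filter fun r : Fin k → Fin t → Fin (2^w) =>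
        d ≤ (univ.filter fun p : Fin k × Fin t => ∃ b < p.2, r p.1 b = r p.1 p.2).card) := by
    intro r hr
    simp only [mem_filter, mem_univ, true_and] at hr ⊢
    rw [hG, not_lt] at hr
    have hhits : (Nat.card {ic : Fin k × Fin (2^w) // ∃ a : Fin t, r ic.1 a = ic.2})
        = (univ.filter fun p : Fin k × Fin t => ¬ ∃ b < p.2, r p.1 b = r p.1 p.2).card := by
      rw [Nat.card_eq_fintype_card, Fintype.card_subtype, hits_card r]
    rw [hhits] at hr
    set A := (univ.filter fun p : Fin k × Fin t => ∃ b < p.2, r p.1 b = r p.1 p.2).card with hA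
    set B := (univ.filter fun p : Fin k × Fin t => ¬ ∃ b < p.2, r p.1 b = r p.1 p.2).card with hB
    have hAB : A + B = k * t := by
      rw [hA, hB]
      rw [Finset.card_filter_add_card_filter_not]
      simp [card_univ]
    have hABR : (A:ℝ) + (B:ℝ) = (k:ℝ) * t := by exact_mod_cast hAB
    rw [hd]
    apply Nat.ceil_le.mpr
    have hx : ((k*t:ℕ):ℝ)/s + (1 - 1/s) * k * t = (k:ℝ)*t := by
      push_cast
      field_simp
      ring
    linarith
  have hbadcount := le_trans (Finset.card_le_card hbadsub) (bad_card ht d)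
  have hbadR : (((univ.filter fun r : Fin k → Fin t → Fin (2^w) => ¬ G r)).card : ℝ)
      ≤ q * P^(k*t) := by
    calc (((univ.filter fun r : Fin k → Fin t → Fin (2^w) => ¬ G r)).card : ℝ)
        ≤ (((k*t).choose d * (t ^ d * (2^w) ^ (k*t - d)) : ℕ) : ℝ) := by exact_mod_cast hbadcount
      _ = (((k*t).choose d : ℕ) : ℝ) * (t:ℝ)^d * P^(k*t - d) := by push_cast; ring
      _ ≤ q * P^(k*t) := hkey
  have hTcard : Nat.card (Fin k → Fin t → Fin (2^w)) = (2^w)^(k*t) := by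
    rw [Nat.card_eq_fintype_card]
    simp only [Fintype.card_fun, Fintype.card_fin]
    rw [← pow_mul, mul_comm]
  have hsplit : ((univ.filter G).card : ℝ)
      = P^(k*t) - (((univ.filter fun r : Fin k → Fin t → Fin (2^w) => ¬ G r)).card : ℝ) := by
    have h1 : (univ.filter G).card
        + ((univ.filter fun r : Fin k → Fin t → Fin (2^w) => ¬ G r)).card
        = (2^w)^(k*t) := by
      rw [Finset.card_filter_add_card_filter_not]
      simp only [card_univ, Fintype.card_fun, Fintype.card_fin]
      rw [← pow_mul, mul_comm]
    have h2 : ((univ.filter G).card : ℝ)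
        + ((univ.filter fun r : Fin k → Fin t → Fin (2^w) => ¬ G r)).card
        = ((2^w : ℕ) : ℝ)^(k*t) := by exact_mod_cast h1
    have h3 : ((2^w : ℕ) : ℝ) = P := by push_cast; rfl
    rw [h3] at h2
    linarith
  rw [hgood, hTcard]
  have hcast : (((2^w)^(k*t) : ℕ) : ℝ) = P^(k*t) := by push_cast; rfl
  rw [hcast, hsplit]
  rw [le_div_iff₀ (by positivity)]
  nlinarith [hbadR]
end
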